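/- arXiv:1701.07818 — 3 statements merged into one kernel-verified Lean document; each statement's English description precedes it below -/
import Mathlib

section
/- For odd r = 2m+1 ≥ 3 and an integer 1 ≤ i ≤ m, define J_i(r) = 1 + Σ_{j=1}^{i−1} ∏_{k=1}^{j} ( −4 sin(2π(i−k)/r)·sin(2π(i+k)/r) ) (Habiro's formula for the i-th colored Jones polynomial of the figure-eight knot at t = e^{4πi/r}). Then for every ε > 0 there exists R such that for every odd r = 2m+1 ≥ R and every integer i with 1 ≤ i ≤ m, one has |J_i(r)| ≤ exp( r·( 3Λ(π/3)/(2π) + ε ) ). -/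
open Real

/-- The Lobachevsky function `Λ(x) = -∫₀ˣ log|2 sin t| dt`. -/
noncomputable def lob (x : ℝ) : ℝ := -∫ t in (0:ℝ)..x, Real.log |2 * Real.sin t|

/-- Habiro's formula for the value at `t = e^{4πi/r}` of the `i`-th colored
Jones polynomial of the figure-eight knot. -/
noncomputable def fig8J (r i : ℕ) : ℝ :=
  1 + ∑ j ∈ Finset.Icc 1 (i-1), ∏ k ∈ Finset.Icc 1 j,
    (-4 * Real.sin (2*π*((i:ℝ)-(k:ℝ))/r) * Real.sin (2*π*((i:ℝ)+(k:ℝ))/r))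

set_option maxHeartbeats 1000000

open MeasureTheory intervalIntegral Set

noncomputable def FF (t : ℝ) : ℝ := Real.log |2 * Real.sin t|

lemma FF_le (t : ℝ) : FF t ≤ Real.log 2 := by
  unfold FF
  rcases eq_or_ne (Real.sin t) 0 with h | h
  · simp [h]; positivity
  · apply Real.log_le_log (by positivity)
    rw [abs_mul]
    simp only [abs_two]
    nlinarith [abs_sin_le_one t, abs_nonneg (Real.sin t)]

lemma log_int01 : IntervalIntegrable Real.log volume 0 1 := by
  have hg : IntervalIntegrable (fun x : ℝ => 2 * x ^ (-(1:ℝ)/2)) volume 0 1 :=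
    (intervalIntegral.intervalIntegrable_rpow' (by norm_num)).const_mul 2
  apply hg.mono_fun Real.measurable_log.aestronglyMeasurable
  rw [Filter.EventuallyLE]
  rw [MeasureTheory.ae_restrict_iff' measurableSet_uIoc]
  filter_upwards with x hx
  rw [Set.uIoc_of_le (by norm_num : (0:ℝ) ≤ 1)] at hx
  obtain ⟨hx0, hx1⟩ := hx
  have hlog : Real.log x ≤ 0 := Real.log_nonpos (le_of_lt hx0) hx1
  have hrpow : (0:ℝ) < x ^ (-(1:ℝ)/2) := Real.rpow_pos_of_pos hx0 _
  rw [Real.norm_eq_abs, Real.norm_eq_abs, abs_of_nonpos hlog, abs_of_pos (by linarith)]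
  -- -log x ≤ 2 x^{-1/2}
  have h1 : Real.log (x ^ (-(1:ℝ)/2)) ≤ x ^ (-(1:ℝ)/2) - 1 := Real.log_le_sub_one_of_pos hrpow
  rw [Real.log_rpow hx0] at h1
  nlinarith

lemma log_int0pi : IntervalIntegrable Real.log volume 0 π := by
  apply log_int01.trans
  apply ContinuousOn.intervalIntegrable
  apply Real.continuousOn_log.mono
  intro x hx
  rw [Set.uIcc_of_le (by nlinarith [Real.pi_gt_three] : (1:ℝ) ≤ π)] at hx
  simp only [Set.mem_compl_iff, Set.mem_singleton_iff]
  intro h; rw [h] at hx; exact absurd hx.1 (by norm_num)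

lemma log_pi_sub_int : IntervalIntegrable (fun t : ℝ => Real.log (π - t)) volume 0 π := by
  have h := (log_int0pi.comp_sub_left π)
  simpa using h.symm

lemma sin_lower (t : ℝ) (h0 : 0 < t) (h1 : t < π) : 2/π^2 * (t * (π - t)) ≤ Real.sin t := by
  have hπ : (0:ℝ) < π := Real.pi_pos
  rcases le_or_gt t (π/2) with h | h
  · have h5 := Real.mul_le_sin (le_of_lt h0) h
    have key : 2/π^2 * (t * (π - t)) = (2/π*t)*((π-t)/π) := by field_simp
    rw [key]
    have h6 : (π - t)/π ≤ 1 := by rw [div_le_one hπ]; linarith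
    have h7 : (0:ℝ) ≤ 2/π*t := by positivity
    nlinarith
  · have h2 : π - t ≤ π/2 := by linarith
    have h3 : 0 ≤ π - t := by linarith
    have h5 := Real.mul_le_sin h3 h2
    rw [Real.sin_pi_sub t] at h5
    have key : 2/π^2 * (t * (π - t)) = (2/π*(π-t))*(t/π) := by field_simp
    rw [key]
    have h6 : t/π ≤ 1 := by rw [div_le_one hπ]; linarith
    have h7 : (0:ℝ) ≤ 2/π*(π-t) := by positivity
    nlinarith

lemma FF_int_0pi : IntervalIntegrable FF volume 0 π := by
  have hπ : (0:ℝ) < π := Real.pi_pos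
  have hg : IntervalIntegrable
      (fun t : ℝ => Real.log (π^2) - Real.log t - Real.log (π - t)) volume 0 π :=
    ((intervalIntegrable_const.sub log_int0pi).sub log_pi_sub_int)
  apply hg.mono_fun
  · apply Measurable.aestronglyMeasurable
    exact Real.measurable_log.comp ((continuous_abs.comp
      (continuous_const.mul Real.continuous_sin)).measurable)
  · rw [Filter.EventuallyLE, MeasureTheory.ae_restrict_iff' measurableSet_uIoc]
    have hpi_ae : ∀ᵐ x : ℝ, x ≠ π := by
      rw [MeasureTheory.ae_iff]
      simpa using MeasureTheory.measure_singleton π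
    filter_upwards [hpi_ae] with t htpi ht
    rw [Set.uIoc_of_le (le_of_lt hπ)] at ht
    obtain ⟨h0, h1'⟩ := ht
    have h1 : t < π := lt_of_le_of_ne h1' htpi
    have hsin : 0 < Real.sin t := Real.sin_pos_of_pos_of_lt_pi h0 h1
    have hlow := sin_lower t h0 h1
    have hFF : FF t = Real.log (2 * Real.sin t) := by
      unfold FF; rw [abs_of_pos (by linarith)]
    -- g t ≥ 0 bounds
    have hprod : 0 < t * (π - t) := by nlinarith
    have hlogle : Real.log t + Real.log (π - t) ≤ Real.log (π^2) - Real.log 4 := by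
      have : t * (π - t) ≤ π^2/4 := by nlinarith [sq_nonneg (t - π/2)]
      have h8 : Real.log (t * (π-t)) ≤ Real.log (π^2/4) := Real.log_le_log hprod this
      rw [Real.log_mul (by linarith) (by linarith)] at h8
      rw [Real.log_div (by positivity) (by norm_num)] at h8
      linarith
    have hg0 : Real.log 2 ≤ Real.log (π^2) - Real.log t - Real.log (π - t) := by
      have h4 : Real.log 2 ≤ Real.log 4 := Real.log_le_log (by norm_num) (by norm_num)
      linarith
    have hl2 : (0:ℝ) ≤ Real.log 2 := Real.log_nonneg (by norm_num)
    rw [Real.norm_eq_abs, Real.norm_eq_abs,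
      abs_of_nonneg (by linarith : (0:ℝ) ≤ Real.log (π^2) - Real.log t - Real.log (π - t))]
    rw [abs_le]
    constructor
    · -- -g ≤ FF t
      rw [hFF]
      have h9 : Real.log (2/π^2 * (t * (π - t))) ≤ Real.log (2 * Real.sin t) := by
        apply Real.log_le_log (by positivity)
        nlinarith
      rw [Real.log_mul (by positivity) (ne_of_gt hprod),
          Real.log_div (by norm_num) (by positivity),
          Real.log_mul (ne_of_gt h0) (by linarith)] at h9
      linarith
    · -- FF t ≤ g
      have := FF_le t
      linarith

lemma FF_per : Function.Periodic FF π := by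
  intro x
  unfold FF
  rw [Real.sin_add_pi]
  rw [show (2:ℝ) * -Real.sin x = -(2 * Real.sin x) by ring, abs_neg]

lemma FF_int_sym (n : ℕ) : IntervalIntegrable FF volume (-(n:ℝ)*π) ((n:ℝ)*π) := by
  induction n with
  | zero => simp
  | succ n ih =>
    have hπ := Real.pi_pos
    have left : IntervalIntegrable FF volume (-((n:ℝ)+1)*π) (-(n:ℝ)*π) := by
      have h := FF_int_0pi.comp_add_right (((n:ℝ)+1)*π)
      have : (fun x => FF (x + ((n:ℝ)+1)*π)) = FF := by
        funext x
        have := (FF_per.nat_mul (n+1)) x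
        push_cast at this ⊢
        rw [show ((n:ℝ)+1)*π = (↑(n+1):ℝ)*π by push_cast; ring] at *
        convert this using 2 <;> push_cast <;> ring
      rw [this] at h
      convert h using 1 <;> ring
    have right : IntervalIntegrable FF volume ((n:ℝ)*π) (((n:ℝ)+1)*π) := by
      have h := FF_int_0pi.comp_add_right (-(n:ℝ)*π)
      have : (fun x => FF (x + -(n:ℝ)*π)) = FF := by
        funext x
        have h2 := (FF_per.nat_mul n).sub_eq x
        push_cast at h2 ⊢
        rw [show x + -(n:ℝ)*π = x - (n:ℝ)*π by ring]
        exact h2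
      rw [this] at h
      convert h using 1 <;> ring
    have h1 : IntervalIntegrable FF volume (-((n:ℝ)+1)*π) ((n:ℝ)*π) := left.trans ih
    have h2 : IntervalIntegrable FF volume (-((n:ℝ)+1)*π) (((n:ℝ)+1)*π) := h1.trans right
    convert h2 using 2 <;> push_cast <;> ring
    
lemma FF_int (a b : ℝ) : IntervalIntegrable FF volume a b := by
  obtain ⟨n, hn⟩ := exists_nat_ge (max |a| |b|)
  have hπ : (1:ℝ) ≤ π := by nlinarith [Real.pi_gt_three]
  have hna : |a| ≤ (n:ℝ)*π := by
    calc |a| ≤ (n:ℝ) := le_trans (le_max_left _ _) hn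
    _ ≤ (n:ℝ)*π := by nlinarith [Nat.cast_nonneg (α := ℝ) n]
  have hnb : |b| ≤ (n:ℝ)*π := by
    calc |b| ≤ (n:ℝ) := le_trans (le_max_right _ _) hn
    _ ≤ (n:ℝ)*π := by nlinarith [Nat.cast_nonneg (α := ℝ) n]
  apply (FF_int_sym n).mono_set
  rw [abs_le] at hna hnb
  apply Set.uIcc_subset_uIcc <;> rw [Set.mem_uIcc] <;> left <;>
    constructor <;> linarith [hna.1, hna.2, hnb.1, hnb.2]

lemma lob_def (x : ℝ) : lob x = -∫ t in (0:ℝ)..x, FF t := rfl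

lemma integral_FF (u v : ℝ) : ∫ t in u..v, FF t = lob u - lob v := by
  rw [lob_def, lob_def]
  have := intervalIntegral.integral_interval_sub_left (FF_int 0 v) (FF_int 0 u)
  rw [← this]; ring

lemma lob_zero : lob 0 = 0 := by rw [lob_def]; simp

lemma sin_cos_zeros_countable :
    Set.Countable {t : ℝ | Real.sin t = 0 ∨ Real.cos t = 0} := by
  apply Set.Countable.mono _ ((Set.countable_range (fun k : ℤ => (k:ℝ) * π)).union
    (Set.countable_range (fun k : ℤ => (2*(k:ℝ)+1) * π / 2)))
  intro t ht
  rcases ht with h | h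
  · left
    obtain ⟨n, hn⟩ := Real.sin_eq_zero_iff.1 h
    exact ⟨n, hn⟩
  · right
    obtain ⟨n, hn⟩ := Real.cos_eq_zero_iff.1 h
    exact ⟨n, hn.symm⟩

lemma FF_double : ∀ x : ℝ, lob (2*x) = 2 * lob x + 2 * lob (x + π/2) - 2 * lob (π/2) := by
  intro x
  have hhalf : ∫ t in (0:ℝ)..x, FF (2*t) = (1/2) * ∫ t in (0:ℝ)..(2*x), FF t := by
    rw [intervalIntegral.integral_comp_mul_left FF (by norm_num : (2:ℝ) ≠ 0)]
    simp [smul_eq_mul]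
  have hsplit : ∫ t in (0:ℝ)..x, FF (2*t)
      = (∫ t in (0:ℝ)..x, FF t) + ∫ t in (0:ℝ)..x, FF (t + π/2) := by
    rw [← intervalIntegral.integral_add (FF_int 0 x)
      ((FF_int (π/2) (x + π/2)).comp_add_right (π/2) |>.mono_set (by simp))]
    apply intervalIntegral.integral_congr_ae
    have hz : ∀ᵐ t : ℝ, t ∉ {t : ℝ | Real.sin t = 0 ∨ Real.cos t = 0} := by
      rw [MeasureTheory.ae_iff]
      simp only [not_not]
      exact sin_cos_zeros_countable.measure_zero volume
    filter_upwards [hz] with t ht _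
    simp only [Set.mem_setOf_eq, not_or] at ht
    obtain ⟨hs, hc⟩ := ht
    unfold FF
    rw [Real.sin_two_mul]
    rw [show (2:ℝ) * (2 * Real.sin t * Real.cos t) = (2*Real.sin t) * (2*Real.cos t) by ring]
    rw [abs_mul, Real.log_mul (by simp [abs_ne_zero]; exact hs) (by simp [abs_ne_zero]; exact hc)]
    rw [Real.sin_add_pi_div_two]
  have hshift : ∫ t in (0:ℝ)..x, FF (t + π/2) = lob (π/2) - lob (x + π/2) := by
    rw [intervalIntegral.integral_comp_add_right FF (π/2)]
    rw [show (0:ℝ) + π/2 = π/2 by ring]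
    exact integral_FF _ _
  rw [hshift] at hsplit
  rw [hsplit, integral_FF 0 (2*x), integral_FF 0 x, lob_zero] at hhalf
  linarith

lemma lob_pi : lob π = 0 := by
  have := FF_double (π/2)
  rw [show 2*(π/2) = π by ring, show π/2 + π/2 = π by ring] at this
  linarith

lemma lob_reflect (x : ℝ) : lob (π - x) = - lob x := by
  have h : ∫ t in (0:ℝ)..x, FF (π - t) = ∫ t in (π - x)..π, FF t := by
    rw [intervalIntegral.integral_comp_sub_left FF π]
    norm_num
  have hFFr : ∀ t : ℝ, FF (π - t) = FF t := by
    intro t; unfold FF; rw [Real.sin_pi_sub]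
  simp only [hFFr] at h
  rw [integral_FF, integral_FF, lob_zero, lob_pi] at h
  linarith

lemma lob_pi_div_two : lob (π/2) = 0 := by
  have := lob_reflect (π/2)
  rw [show π - π/2 = π/2 by ring] at this
  linarith

lemma lob_periodic (x : ℝ) : lob (x + π) = lob x := by
  have h := FF_per.intervalIntegral_add_eq x 0
  rw [zero_add, integral_FF, integral_FF, lob_zero, lob_pi] at h
  linarith

lemma lob_id : 2 * lob (π/6) = 3 * lob (π/3) := by
  have h := FF_double (π/3)
  rw [show 2*(π/3) = π - π/3 by ring, lob_reflect (π/3),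
    show π/3 + π/2 = π - π/6 by ring, lob_reflect (π/6), lob_pi_div_two] at h
  linarith

lemma intFF_nonpos {a b : ℝ} (hab : a ≤ b) (h : ∀ u ∈ Set.Icc a b, FF u ≤ 0) :
    ∫ t in a..b, FF t ≤ 0 := by
  have h0 : 0 ≤ ∫ t in a..b, -FF t :=
    _root_.intervalIntegral.integral_nonneg hab (fun u hu => by simpa using h u hu)
  rw [intervalIntegral.integral_neg] at h0
  linarith

lemma intFF_nonneg {a b : ℝ} (hab : a ≤ b) (h : ∀ u ∈ Set.Icc a b, 0 ≤ FF u) :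
    0 ≤ ∫ t in a..b, FF t :=
  _root_.intervalIntegral.integral_nonneg hab h

-- sin is at least 1/2 on [π/6, 5π/6]
lemma sin_ge_half {t : ℝ} (h1 : π/6 ≤ t) (h2 : t ≤ 5*π/6) : 1/2 ≤ Real.sin t := by
  have hπ := Real.pi_pos
  rcases le_or_gt t (π/2) with h | h
  · rw [← Real.sin_pi_div_six]
    apply Real.sin_le_sin_of_le_of_le_pi_div_two (by linarith) (by linarith) h1
  · rw [← Real.sin_pi_div_six, ← Real.sin_pi_sub t]
    apply Real.sin_le_sin_of_le_of_le_pi_div_two (by linarith) (by linarith) (by linarith)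

lemma sin_le_half_lo {t : ℝ} (h1 : 0 ≤ t) (h2 : t ≤ π/6) : Real.sin t ≤ 1/2 := by
  have hπ := Real.pi_pos
  rw [← Real.sin_pi_div_six]
  apply Real.sin_le_sin_of_le_of_le_pi_div_two (by linarith) (by linarith) h2

lemma FF_nonpos_lo {t : ℝ} (h1 : 0 ≤ t) (h2 : t ≤ π/6) : FF t ≤ 0 := by
  have hπ := Real.pi_pos
  have hs0 : 0 ≤ Real.sin t := Real.sin_nonneg_of_nonneg_of_le_pi h1 (by linarith)
  have := sin_le_half_lo h1 h2
  unfold FF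
  apply Real.log_nonpos (by positivity)
  rw [abs_of_nonneg (by linarith)]; linarith

lemma FF_nonneg_mid {t : ℝ} (h1 : π/6 ≤ t) (h2 : t ≤ 5*π/6) : 0 ≤ FF t := by
  have := sin_ge_half h1 h2
  unfold FF
  apply Real.log_nonneg
  rw [abs_of_nonneg (by linarith)]; linarith

lemma FF_nonpos_hi {t : ℝ} (h1 : 5*π/6 ≤ t) (h2 : t ≤ π) : FF t ≤ 0 := by
  have hπ := Real.pi_pos
  have : FF (π - t) ≤ 0 := FF_nonpos_lo (by linarith) (by linarith)
  unfold FF at *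
  rwa [Real.sin_pi_sub] at this

lemma lob_pi_six_nonneg : 0 ≤ lob (π/6) := by
  have hπ := Real.pi_pos
  have h : ∫ t in (0:ℝ)..(π/6), FF t ≤ 0 := by
    apply intFF_nonpos (by linarith)
    intro u hu
    exact FF_nonpos_lo hu.1 hu.2
  rw [integral_FF, lob_zero] at h
  linarith

lemma lob_bound_pi {x : ℝ} (h1 : 0 ≤ x) (h2 : x ≤ π) : |lob x| ≤ lob (π/6) := by
  have hπ := Real.pi_pos
  rw [abs_le]
  have hup : ∀ y : ℝ, 0 ≤ y → y ≤ π/6 → 0 ≤ lob y ∧ lob y ≤ lob (π/6) := by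
    intro y hy1 hy2
    constructor
    · have h : ∫ t in (0:ℝ)..y, FF t ≤ 0 := by
        apply intFF_nonpos hy1
        intro u hu; exact FF_nonpos_lo hu.1 (le_trans hu.2 hy2)
      rw [integral_FF, lob_zero] at h; linarith
    · have h : ∫ t in y..(π/6), FF t ≤ 0 := by
        apply intFF_nonpos hy2
        intro u hu; exact FF_nonpos_lo (le_trans hy1 hu.1) hu.2
      rw [integral_FF] at h; linarith
  rcases le_or_gt x (π/6) with h | h
  · obtain ⟨ha, hb⟩ := hup x h1 h
    exact ⟨by linarith [lob_pi_six_nonneg], hb⟩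
  rcases le_or_gt x (5*π/6) with h' | h'
  · constructor
    · -- lob x ≥ lob (5π/6) = - lob (π/6)
      have h : 0 ≤ ∫ t in x..(5*π/6), FF t := by
        apply intFF_nonneg h'
        intro u hu; exact FF_nonneg_mid (by linarith [hu.1]) hu.2
      rw [integral_FF] at h
      have h56 : lob (5*π/6) = - lob (π/6) := by
        rw [show 5*π/6 = π - π/6 by ring, lob_reflect]
      linarith
    · have h : 0 ≤ ∫ t in (π/6)..x, FF t := by
        apply intFF_nonneg (by linarith)
        intro u hu; exact FF_nonneg_mid hu.1 (by linarith [hu.2])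
      rw [integral_FF] at h
      linarith
  · have hrefl : lob x = - lob (π - x) := by rw [lob_reflect, neg_neg]
    obtain ⟨ha, hb⟩ := hup (π - x) (by linarith) (by linarith)
    constructor
    · rw [hrefl]; linarith
    · rw [hrefl]; linarith [lob_pi_six_nonneg]

lemma lob_bound {x : ℝ} (h1 : 0 ≤ x) (h2 : x ≤ 2*π) : |lob x| ≤ lob (π/6) := by
  have hπ := Real.pi_pos
  rcases le_or_gt x π with h | h
  · exact lob_bound_pi h1 h
  · have : lob x = lob (x - π) := by
      rw [← lob_periodic (x - π)]; ring_nf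
    rw [this]
    exact lob_bound_pi (by linarith) (by linarith)

lemma lob_continuous : Continuous lob := by
  have h := intervalIntegral.continuous_primitive FF_int 0
  exact h.neg

lemma FF_mono {s t : ℝ} (hs : 0 < s) (hst : s ≤ t) (ht : t ≤ π/2) : FF s ≤ FF t := by
  have hπ := Real.pi_pos
  have hsins : 0 < Real.sin s := Real.sin_pos_of_pos_of_lt_pi hs (by linarith)
  have hmono : Real.sin s ≤ Real.sin t :=
    Real.sin_le_sin_of_le_of_le_pi_div_two (by linarith) ht hst
  unfold FF
  rw [abs_of_pos (by linarith), abs_of_pos (by linarith)]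
  exact Real.log_le_log (by linarith) (by linarith)

lemma FF_anti {s t : ℝ} (hs : π/2 ≤ s) (hst : s ≤ t) (ht : t < π) : FF t ≤ FF s := by
  have hπ := Real.pi_pos
  have h1 : FF t = FF (π - t) := by unfold FF; rw [Real.sin_pi_sub]
  have h2 : FF s = FF (π - s) := by unfold FF; rw [Real.sin_pi_sub]
  rw [h1, h2]
  exact FF_mono (by linarith) (by linarith) (by linarith)

lemma FF_shift (t : ℝ) : FF t = FF (t - π) := by
  have := FF_per (t - π); rw [sub_add_cancel] at this; exact this

lemma FF_mono' {s t : ℝ} (hs : π < s) (hst : s ≤ t) (ht : t ≤ 3*π/2) : FF s ≤ FF t := by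
  rw [FF_shift s, FF_shift t]
  exact FF_mono (by linarith) (by linarith) (by linarith)

lemma FF_anti' {s t : ℝ} (hs : 3*π/2 ≤ s) (hst : s ≤ t) (ht : t < 2*π) : FF t ≤ FF s := by
  rw [FF_shift s, FF_shift t]
  exact FF_anti (by linarith) (by linarith) (by linarith)

lemma master (r : ℕ) (hr : 8 ≤ r) (hodd : r % 2 = 1) (ε' δ : ℝ) (hε' : 0 ≤ ε') (hδ : 0 < δ)
    (hUC : ∀ x ∈ Set.Icc 0 (2*π), ∀ y ∈ Set.Icc 0 (2*π), |x - y| < δ → |lob x - lob y| ≤ ε')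
    (hrδ : 2*π/r < δ)
    (a b : ℕ) (ha : 1 ≤ a) (hab : a ≤ b) (hb : b ≤ r - 2) :
    ∑ n ∈ Finset.Icc a b, FF (2*π*n/r) ≤
      (r/(2*π)) * (lob (2*π*(a-1 : ℕ)/r) - lob (2*π*(b+1 : ℕ)/r))
        + (r/(2*π))*(5*ε') + 4*Real.log 2 := by
  classical
  have hπ := Real.pi_pos
  have hrpos : (0:ℝ) < r := by positivity
  have hr2 : (8:ℝ) ≤ r := by exact_mod_cast hr
  set θ : ℕ → ℝ := fun n => 2*π*n/r with hθ
  have hθmono : ∀ {p q : ℕ}, p ≤ q → θ p ≤ θ q := by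
    intro p q hpq
    simp only [hθ]
    have hc : (p:ℝ) ≤ q := by exact_mod_cast hpq
    gcongr
  have hwidth : ∀ n : ℕ, θ (n+1) - θ n = 2*π/r := by
    intro n; simp only [hθ]; push_cast; field_simp; ring
  -- the predicates
  set incL : ℕ → Prop := fun n => ((n:ℝ)+1 ≤ (r:ℝ)/4) ∨ ((r:ℝ)/2 ≤ (n:ℝ) ∧ (n:ℝ)+1 ≤ 3*(r:ℝ)/4)
    with hincL
  set decL : ℕ → Prop := fun n => ((r:ℝ)/4 ≤ (n:ℝ)-1 ∧ (n:ℝ) ≤ (r:ℝ)/2) ∨ (3*(r:ℝ)/4 ≤ (n:ℝ)-1)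
    with hdecL
  set good : ℕ → Prop := fun n => incL n ∨ decL n with hgood
  set φ : ℕ → ℕ := fun n => if incL n then n else n - 1 with hφ
  set S := Finset.Icc a b with hS
  set T := Finset.Icc (a-1) b with hT
  set I : ℕ → ℝ := fun c => ∫ t in θ c..θ (c+1), FF t with hI
  -- parity facts
  have parity : ∀ n : ℕ, 2*n ≠ r := by
    intro n h; omega
  -- pointwise bound for good n
  have key : ∀ n ∈ S.filter good, FF (θ n) ≤ (r/(2*π)) * I (φ n) := by
    intro n hn
    rw [Finset.mem_filter] at hn
    obtain ⟨hnS, hgoodn⟩ := hn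
    rw [Finset.mem_Icc] at hnS
    have hn1 : 1 ≤ n := le_trans ha hnS.1
    have hnb : n ≤ r - 2 := le_trans hnS.2 hb
    have base : ∀ (c : ℕ), (∀ t ∈ Set.Icc (θ c) (θ (c+1)), FF (θ n) ≤ FF t) →
        FF (θ n) ≤ (r/(2*π)) * I c := by
      intro c hcomp
      have hle : θ c ≤ θ (c+1) := hθmono (Nat.le_succ c)
      have h1 : ∫ t in θ c..θ (c+1), (fun _ => FF (θ n)) t ≤ I c :=
        intervalIntegral.integral_mono_on hle intervalIntegrable_const (FF_int _ _) hcomp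
      rw [intervalIntegral.integral_const, smul_eq_mul] at h1
      have hw : θ (c+1) - θ c = 2*π/r := hwidth c
      rw [hw] at h1
      have heq : FF (θ n) = (r/(2*π)) * (2*π/r * FF (θ n)) := by
        field_simp
      rw [heq]
      apply mul_le_mul_of_nonneg_left h1 (by positivity)
    by_cases hinc : incL n
    · have hφn : φ n = n := by rw [hφ]; simp [hinc]
      rw [hφn]
      rcases hinc with h1 | ⟨h2a, h2b⟩
      · -- increasing piece (0, π/2]
        apply base
        intro t ht
        have hpos : 0 < θ n := by
          simp only [hθ]
          have : (1:ℝ) ≤ n := by exact_mod_cast hn1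
          positivity
        have hub : θ (n+1) ≤ π/2 := by
          simp only [hθ]
          rw [div_le_iff₀ hrpos]
          push_cast
          nlinarith
        exact FF_mono hpos ht.1 (le_trans ht.2 hub)
      · -- increasing piece (π, 3π/2]
        apply base
        intro t ht
        have h2n : r + 1 ≤ 2*n := by
          have : r ≤ 2*n := by
            have : (r:ℝ) ≤ 2*n := by linarith
            exact_mod_cast this
          have := parity n
          omega
        have hpos : π < θ n := by
          simp only [hθ]
          rw [lt_div_iff₀ hrpos]
          have : (r:ℝ) + 1 ≤ 2*n := by exact_mod_cast h2n
          nlinarith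
        have hub : θ (n+1) ≤ 3*π/2 := by
          simp only [hθ]
          rw [div_le_iff₀ hrpos]
          push_cast
          nlinarith
        exact FF_mono' hpos ht.1 (le_trans ht.2 hub)
    · have hdec : decL n := hgoodn.resolve_left hinc
      have hφn : φ n = n - 1 := by rw [hφ]; simp [hinc]
      have hsub : n - 1 + 1 = n := by omega
      rw [hφn]
      have hcast : ((n-1 : ℕ):ℝ) = (n:ℝ) - 1 := by
        push_cast [Nat.cast_sub hn1]
        ring
      rcases hdec with ⟨h3a, h3b⟩ | h4
      · -- decreasing piece [π/2, π)
        apply base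
        intro t ht
        rw [hsub] at ht
        have hlb : π/2 ≤ θ (n-1) := by
          simp only [hθ, hcast]
          rw [le_div_iff₀ hrpos]
          nlinarith
        have h2n : 2*n + 1 ≤ r := by
          have : 2*n ≤ r := by
            have : (2:ℝ)*n ≤ r := by linarith
            exact_mod_cast this
          have := parity n
          omega
        have hub : θ n < π := by
          simp only [hθ]
          rw [div_lt_iff₀ hrpos]
          have : (2:ℝ)*n + 1 ≤ r := by exact_mod_cast h2n
          nlinarith
        exact FF_anti (le_trans hlb ht.1) ht.2 hub
      · -- decreasing piece [3π/2, 2π)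
        apply base
        intro t ht
        rw [hsub] at ht
        have hlb : 3*π/2 ≤ θ (n-1) := by
          simp only [hθ, hcast]
          rw [le_div_iff₀ hrpos]
          nlinarith
        have hub : θ n < 2*π := by
          simp only [hθ]
          rw [div_lt_iff₀ hrpos]
          have : (n:ℝ) ≤ (r:ℝ) - 2 := by
            have : (n:ℝ) ≤ ((r - 2 : ℕ):ℝ) := by exact_mod_cast hnb
            rw [Nat.cast_sub (by omega)] at this
            push_cast at this
            linarith
          nlinarith
        exact FF_anti' (le_trans hlb ht.1) ht.2 hub
  -- injectivity of φ on the good set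
  have hcontra : ∀ p q : ℕ, incL p → decL q → q = p + 1 → False := by
    intro p q hip hdq hpq
    subst hpq
    rcases hip with h1 | ⟨h2a, h2b⟩ <;> rcases hdq with ⟨h3a, h3b⟩ | h4 <;>
      [skip; skip; skip; skip] <;> push_cast at * <;> linarith
  have hinj : ∀ x ∈ S.filter good, ∀ y ∈ S.filter good, φ x = φ y → x = y := by
    intro x hx y hy hxy
    rw [Finset.mem_filter, Finset.mem_Icc] at hx hy
    have hx1 : 1 ≤ x := le_trans ha hx.1.1
    have hy1 : 1 ≤ y := le_trans ha hy.1.1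
    by_cases hix : incL x <;> by_cases hiy : incL y
    · simpa only [hφ, if_pos hix, if_pos hiy] using hxy
    · have hdy : decL y := hy.2.resolve_left hiy
      simp only [hφ, if_pos hix, if_neg hiy] at hxy
      exact absurd (hcontra x y hix hdy (by omega)) (by simp)
    · have hdx : decL x := hx.2.resolve_left hix
      simp only [hφ, if_neg hix, if_pos hiy] at hxy
      exact absurd (hcontra y x hiy hdx (by omega)) (by simp)
    · simp only [hφ, if_neg hix, if_neg hiy] at hxy
      omega
  have himg : (S.filter good).image φ ⊆ T := by
    intro c hc
    rw [Finset.mem_image] at hc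
    obtain ⟨n, hn, rfl⟩ := hc
    rw [Finset.mem_filter, Finset.mem_Icc] at hn
    have hn1 : 1 ≤ n := le_trans ha hn.1.1
    rw [hT, Finset.mem_Icc]
    by_cases hin : incL n
    · simp only [hφ, if_pos hin]; omega
    · simp only [hφ, if_neg hin]; omega
  -- bad set is small
  have hbadsub : S.filter (fun n => ¬ good n) ⊆
      {Nat.ceil ((r:ℝ)/4) - 1, Nat.ceil ((r:ℝ)/4), Nat.ceil (3*(r:ℝ)/4) - 1,
        Nat.ceil (3*(r:ℝ)/4)} := by
    intro n hn
    rw [Finset.mem_filter] at hn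
    obtain ⟨hnS, hbad⟩ := hn
    rw [hgood] at hbad
    obtain ⟨hni, hnd⟩ := not_or.mp hbad
    simp only [hincL] at hni
    simp only [hdecL] at hnd
    push_neg at hni hnd
    simp only [Finset.mem_insert, Finset.mem_singleton]
    rcases le_or_gt (n:ℝ) ((r:ℝ)/2) with hc | hc
    · have h1 : (r:ℝ)/4 < (n:ℝ)+1 := hni.1
      have h2 : (n:ℝ)-1 < (r:ℝ)/4 := by
        by_contra hcon
        push_neg at hcon
        exact absurd hc (not_le_of_gt (hnd.1 hcon))
      have hcu : Nat.ceil ((r:ℝ)/4) ≤ n + 1 := by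
        rw [Nat.ceil_le]; push_cast; linarith
      have hcl : n ≤ Nat.ceil ((r:ℝ)/4) := by
        have hl := Nat.le_ceil ((r:ℝ)/4)
        have : (n:ℝ) < (Nat.ceil ((r:ℝ)/4) : ℝ) + 1 := by linarith
        have := (by exact_mod_cast this : n < Nat.ceil ((r:ℝ)/4) + 1)
        omega
      omega
    · have h1 : 3*(r:ℝ)/4 < (n:ℝ)+1 := hni.2 (le_of_lt hc)
      have h2 : (n:ℝ)-1 < 3*(r:ℝ)/4 := hnd.2
      have hcu : Nat.ceil (3*(r:ℝ)/4) ≤ n + 1 := by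
        rw [Nat.ceil_le]; push_cast; linarith
      have hcl : n ≤ Nat.ceil (3*(r:ℝ)/4) := by
        have hl := Nat.le_ceil (3*(r:ℝ)/4)
        have : (n:ℝ) < (Nat.ceil (3*(r:ℝ)/4) : ℝ) + 1 := by linarith
        have := (by exact_mod_cast this : n < Nat.ceil (3*(r:ℝ)/4) + 1)
        omega
      omega
  have hbadcard : (S.filter (fun n => ¬ good n)).card ≤ 4 := by
    refine le_trans (Finset.card_le_card hbadsub) ?_
    refine le_trans (Finset.card_insert_le _ _) (Nat.succ_le_succ ?_)
    refine le_trans (Finset.card_insert_le _ _) (Nat.succ_le_succ ?_)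
    refine le_trans (Finset.card_insert_le _ _) (Nat.succ_le_succ ?_)
    simp
  -- sums
  have hgoodsum : ∑ n ∈ S.filter good, FF (θ n)
      ≤ (r/(2*π)) * ∑ c ∈ (S.filter good).image φ, I c := by
    rw [Finset.sum_image hinj, Finset.mul_sum]
    exact Finset.sum_le_sum key
  have hTsum : ∑ c ∈ T, I c = lob (θ (a-1)) - lob (θ (b+1)) := by
    have h1 : T = Finset.Ico (a-1) (b+1) := by rw [hT, Finset.Ico_add_one_right_eq_Icc]
    rw [h1, Finset.sum_Ico_eq_sum_range]
    have h2 : ∀ k < b + 1 - (a-1), IntervalIntegrable FF volume (θ (a-1+k)) (θ (a-1+(k+1))) :=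
      fun k _ => FF_int _ _
    have h3 := intervalIntegral.sum_integral_adjacent_intervals (a := fun k => θ (a-1+k)) h2
    calc ∑ k ∈ Finset.range (b+1-(a-1)), I (a-1+k)
        = ∫ t in θ (a-1+0)..θ (a-1+(b+1-(a-1))), FF t := h3
      _ = lob (θ (a-1)) - lob (θ (b+1)) := by
          rw [show a-1+0 = a-1 from rfl, show a-1+(b+1-(a-1)) = b+1 by omega, integral_FF]
  have hmiss : ∀ c ∈ T, -(I c) ≤ ε' := by
    intro c hc
    rw [hT, Finset.mem_Icc] at hc
    have hcr : c ≤ r - 2 := le_trans hc.2 hb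
    have hθc0 : 0 ≤ θ c := by simp only [hθ]; positivity
    have hθc2 : θ (c+1) ≤ 2*π := by
      simp only [hθ]
      rw [div_le_iff₀ hrpos]
      have hcc : (c:ℝ) ≤ (r:ℝ) - 2 := by
        have h9 : (c:ℝ) ≤ ((r-2:ℕ):ℝ) := by exact_mod_cast hcr
        rw [Nat.cast_sub (by omega)] at h9
        push_cast at h9
        linarith
      push_cast
      nlinarith
    have hmem1 : θ c ∈ Set.Icc (0:ℝ) (2*π) := ⟨hθc0, le_trans (hθmono (Nat.le_succ c)) hθc2⟩
    have hmem2 : θ (c+1) ∈ Set.Icc (0:ℝ) (2*π) := ⟨by simp only [hθ]; positivity, hθc2⟩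
    have hdist : |θ c - θ (c+1)| < δ := by
      have hw := hwidth c
      have : θ c - θ (c+1) = -(2*π/r) := by linarith
      rw [this, abs_neg, abs_of_pos (by positivity)]
      exact hrδ
    have hUCc := hUC (θ c) hmem1 (θ (c+1)) hmem2 hdist
    have hIc : I c = lob (θ c) - lob (θ (c+1)) := integral_FF _ _
    rw [hIc]
    calc -(lob (θ c) - lob (θ (c+1))) ≤ |lob (θ c) - lob (θ (c+1))| := neg_le_abs _
      _ ≤ ε' := hUCc
  have hmisscard : (T \ (S.filter good).image φ).card ≤ 5 := by
    have h1 : (T \ (S.filter good).image φ).card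
        = T.card - ((S.filter good).image φ).card := Finset.card_sdiff_of_subset himg
    have h2 : ((S.filter good).image φ).card = (S.filter good).card :=
      Finset.card_image_of_injOn (fun x hx y hy => hinj x hx y hy)
    have h3 : (S.filter good).card + (S.filter (fun n => ¬ good n)).card = S.card :=
      Finset.card_filter_add_card_filter_not (fun n => good n)
    have h4 : S.card = b + 1 - a := by rw [hS, Nat.card_Icc]
    have h5 : T.card = b + 1 - (a - 1) := by rw [hT, Nat.card_Icc]
    omega
  have hmisssum : - ∑ c ∈ T \ (S.filter good).image φ, I c ≤ 5 * ε' := by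
    calc - ∑ c ∈ T \ (S.filter good).image φ, I c
        = ∑ c ∈ T \ (S.filter good).image φ, -(I c) := by rw [Finset.sum_neg_distrib]
      _ ≤ ∑ c ∈ T \ (S.filter good).image φ, ε' :=
          Finset.sum_le_sum (fun c hc => hmiss c (Finset.mem_sdiff.1 hc).1)
      _ = ((T \ (S.filter good).image φ).card : ℝ) * ε' := by
          rw [Finset.sum_const, nsmul_eq_mul]
      _ ≤ 5 * ε' := by
          apply mul_le_mul_of_nonneg_right _ hε'
          exact_mod_cast hmisscard
  have hbadsum : ∑ n ∈ S.filter (fun n => ¬ good n), FF (θ n) ≤ 4 * Real.log 2 := by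
    calc ∑ n ∈ S.filter (fun n => ¬ good n), FF (θ n)
        ≤ ∑ n ∈ S.filter (fun n => ¬ good n), Real.log 2 :=
          Finset.sum_le_sum (fun n _ => FF_le (θ n))
      _ = ((S.filter (fun n => ¬ good n)).card : ℝ) * Real.log 2 := by
          rw [Finset.sum_const, nsmul_eq_mul]
      _ ≤ 4 * Real.log 2 := by
          apply mul_le_mul_of_nonneg_right _ (Real.log_nonneg one_le_two)
          exact_mod_cast hbadcard
  have himgsum : ∑ c ∈ (S.filter good).image φ, I c
      ≤ (lob (θ (a-1)) - lob (θ (b+1))) + 5*ε' := by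
    have hsd := Finset.sum_sdiff (f := I) himg
    linarith [hTsum, hmisssum]
  have hfinal : ∑ n ∈ S, FF (θ n) ≤
      (r/(2*π)) * (lob (θ (a-1)) - lob (θ (b+1))) + (r/(2*π))*(5*ε') + 4*Real.log 2 := by
    have hsplit := Finset.sum_filter_add_sum_filter_not S good (fun n => FF (θ n))
    have hmul : (0:ℝ) ≤ r/(2*π) := by positivity
    have h6 := mul_le_mul_of_nonneg_left himgsum hmul
    have h7 := le_trans hgoodsum h6
    calc ∑ n ∈ S, FF (θ n)
        = ∑ n ∈ S.filter good, FF (θ n) + ∑ n ∈ S.filter (fun n => ¬ good n), FF (θ n) :=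
          hsplit.symm
      _ ≤ (r/(2*π)) * ((lob (θ (a-1)) - lob (θ (b+1))) + 5*ε') + 4*Real.log 2 := by
          linarith
      _ = (r/(2*π)) * (lob (θ (a-1)) - lob (θ (b+1))) + (r/(2*π))*(5*ε') + 4*Real.log 2 := by
          ring
  simpa only [hθ, hS] using hfinal

lemma sin_ne (r n : ℕ) (hodd : r % 2 = 1) (h1 : 1 ≤ n) (h2 : n + 2 ≤ r) :
    Real.sin (2*π*n/r) ≠ 0 := by
  have hπ := Real.pi_pos
  have hr3 : 0 < r := by omega
  have hrpos : (0:ℝ) < r := by exact_mod_cast hr3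
  intro h
  obtain ⟨z, hz⟩ := Real.sin_eq_zero_iff.1 h
  have key : (z:ℝ) * r = 2*n := by
    have h3 : (z:ℝ) * π * r = 2*π*n := by
      rw [hz]; field_simp
    have := mul_right_cancel₀ (ne_of_gt hπ) (by linarith : (z:ℝ) * r * π = 2*(n:ℝ) * π)
    linarith
  have keyz : z * (r:ℤ) = 2*(n:ℤ) := by exact_mod_cast key
  have hn2 : (n:ℤ) + 2 ≤ (r:ℤ) := by exact_mod_cast h2
  have hn1 : (1:ℤ) ≤ (n:ℤ) := by exact_mod_cast h1
  have hr0 : (0:ℤ) < r := by exact_mod_cast hr3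
  have hz1 : 1 ≤ z := by nlinarith
  have hz2 : z < 2 := by nlinarith
  have : z = 1 := by omega
  subst this
  have hzr : (r:ℤ) = 2*(n:ℤ) := by linarith
  have : r = 2*n := by exact_mod_cast hzr
  omega

/-- Uniform exponential upper bound on the values of the colored Jones polynomials of
the figure-eight knot: for every `ε > 0`, for all sufficiently large odd `r = 2m+1` and
every `1 ≤ i ≤ m`, `|J_i(r)| ≤ exp(r(3Λ(π/3)/(2π) + ε))`. -/
theorem stmt10 :
    ∀ ε : ℝ, 0 < ε → ∃ R : ℕ, ∀ m : ℕ, R ≤ 2*m+1 → ∀ i : ℕ, 1 ≤ i → i ≤ m →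
      |fig8J (2*m+1) i| ≤ Real.exp ((2*(m:ℝ)+1) * (3 * lob (π/3) / (2*π) + ε)) := by
  intro ε hε
  have hπ := Real.pi_pos
  have hUC0 : UniformContinuousOn lob (Set.Icc 0 (2*π)) :=
    isCompact_Icc.uniformContinuousOn_of_continuous lob_continuous.continuousOn
  set ε' : ℝ := π*ε/10 with hε'def
  have hε'pos : 0 < ε' := by positivity
  obtain ⟨δ, hδ, hUCd⟩ := Metric.uniformContinuousOn_iff.1 hUC0 ε' hε'pos
  have hUC : ∀ x ∈ Set.Icc (0:ℝ) (2*π), ∀ y ∈ Set.Icc (0:ℝ) (2*π),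
      |x - y| < δ → |lob x - lob y| ≤ ε' := by
    intro x hx y hy hxy
    have := hUCd x hx y hy (by rwa [Real.dist_eq])
    rw [Real.dist_eq] at this
    exact le_of_lt this
  obtain ⟨R1, hR1⟩ := exists_nat_gt (2*π/δ)
  obtain ⟨R2, hR2⟩ := exists_nat_gt (4112/ε^2)
  refine ⟨R1 + R2 + 9, ?_⟩
  intro m hm i hi1 him
  set r : ℕ := 2*m+1 with hrdef
  have hr8 : 8 ≤ r := by omega
  have hodd : r % 2 = 1 := by omega
  have hrpos : (0:ℝ) < r := by positivity
  have hrR1 : (R1:ℝ) ≤ r := by exact_mod_cast (by omega : R1 ≤ r)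
  have hrR2 : (R2:ℝ) ≤ r := by exact_mod_cast (by omega : R2 ≤ r)
  have hrδ : 2*π/r < δ := by
    rw [div_lt_iff₀ hrpos]
    rw [div_lt_iff₀ hδ] at hR1
    nlinarith
  have hm1 : 1 ≤ m := by omega
  have hc0 : 0 ≤ lob (π/3) := by linarith [lob_id, lob_pi_six_nonneg]
  set c : ℝ := 3 * lob (π/3) / (2*π) with hcdef
  have hcnn : 0 ≤ c := by positivity
  -- per-j product bound
  have hprod : ∀ j ∈ Finset.Icc 1 (i-1),
      |∏ k ∈ Finset.Icc 1 j,
        (-4 * Real.sin (2*π*((i:ℝ)-(k:ℝ))/r) * Real.sin (2*π*((i:ℝ)+(k:ℝ))/r))|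
      ≤ 256 * Real.exp ((r:ℝ) * (c + ε/2)) := by
    intro j hj
    rw [Finset.mem_Icc] at hj
    obtain ⟨hj1, hj2⟩ := hj
    have hji : j + 1 ≤ i := by omega
    -- each factor
    have habs : ∀ k ∈ Finset.Icc 1 j,
        |(-4 * Real.sin (2*π*((i:ℝ)-(k:ℝ))/r) * Real.sin (2*π*((i:ℝ)+(k:ℝ))/r))|
        = Real.exp (FF (2*π*((i-k : ℕ):ℝ)/r)) * Real.exp (FF (2*π*((i+k : ℕ):ℝ)/r)) := by
      intro k hk
      rw [Finset.mem_Icc] at hk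
      obtain ⟨hk1, hk2⟩ := hk
      have hcast1 : ((i-k : ℕ):ℝ) = (i:ℝ) - (k:ℝ) := by
        rw [Nat.cast_sub (by omega)]
      have hcast2 : ((i+k : ℕ):ℝ) = (i:ℝ) + (k:ℝ) := by push_cast; ring
      have hs1 : Real.sin (2*π*((i-k : ℕ):ℝ)/r) ≠ 0 :=
        sin_ne r (i-k) hodd (by omega) (by omega)
      have hs2 : Real.sin (2*π*((i+k : ℕ):ℝ)/r) ≠ 0 :=
        sin_ne r (i+k) hodd (by omega) (by omega)
      rw [← hcast1, ← hcast2]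
      have hfact : -4 * Real.sin (2*π*((i-k : ℕ):ℝ)/r) * Real.sin (2*π*((i+k : ℕ):ℝ)/r)
          = -((2*Real.sin (2*π*((i-k : ℕ):ℝ)/r)) * (2*Real.sin (2*π*((i+k : ℕ):ℝ)/r))) := by
        ring
      rw [hfact, abs_neg, abs_mul]
      have he1 : Real.exp (FF (2*π*((i-k : ℕ):ℝ)/r)) = |2 * Real.sin (2*π*((i-k : ℕ):ℝ)/r)| := by
        unfold FF
        apply Real.exp_log
        rw [abs_pos]
        exact mul_ne_zero two_ne_zero hs1
      have he2 : Real.exp (FF (2*π*((i+k : ℕ):ℝ)/r)) = |2 * Real.sin (2*π*((i+k : ℕ):ℝ)/r)| := by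
        unfold FF
        apply Real.exp_log
        rw [abs_pos]
        exact mul_ne_zero two_ne_zero hs2
      rw [he1, he2]
    rw [Finset.abs_prod, Finset.prod_congr rfl habs, Finset.prod_mul_distrib,
      ← Real.exp_sum, ← Real.exp_sum, ← Real.exp_add]
    -- reindex
    have hre1 : ∑ k ∈ Finset.Icc 1 j, FF (2*π*((i-k : ℕ):ℝ)/r)
        = ∑ n ∈ Finset.Icc (i-j) (i-1), FF (2*π*(n:ℝ)/r) := by
      apply Finset.sum_nbij' (i := fun k => i - k) (j := fun n => i - n)
      · intro k hk; rw [Finset.mem_Icc] at *; omega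
      · intro n hn; rw [Finset.mem_Icc] at *; omega
      · intro k hk; rw [Finset.mem_Icc] at hk; omega
      · intro n hn; rw [Finset.mem_Icc] at hn; omega
      · intro k hk; rfl
    have hre2 : ∑ k ∈ Finset.Icc 1 j, FF (2*π*((i+k : ℕ):ℝ)/r)
        = ∑ n ∈ Finset.Icc (i+1) (i+j), FF (2*π*(n:ℝ)/r) := by
      apply Finset.sum_nbij' (i := fun k => i + k) (j := fun n => n - i)
      · intro k hk; rw [Finset.mem_Icc] at *; omega
      · intro n hn; rw [Finset.mem_Icc] at *; omega
      · intro k hk; rw [Finset.mem_Icc] at hk; omega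
      · intro n hn; rw [Finset.mem_Icc] at hn; omega
      · intro k hk; rfl
    rw [hre1, hre2]
    -- apply master twice
    have hM1 := master r hr8 hodd ε' δ (le_of_lt hε'pos) hδ hUC hrδ (i-j) (i-1)
      (by omega) (by omega) (by omega)
    have hM2 := master r hr8 hodd ε' δ (le_of_lt hε'pos) hδ hUC hrδ (i+1) (i+j)
      (by omega) (by omega) (by omega)
    have hidx1 : i - j - 1 = i - j - 1 := rfl
    have hidx2 : (i - 1) + 1 = i := by omega
    have hidx3 : (i + 1) - 1 = i := by omega
    rw [hidx2] at hM1
    rw [hidx3] at hM2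
    -- lob bounds
    have hθlo : (0:ℝ) ≤ 2*π*((i-j-1 : ℕ):ℝ)/r := by positivity
    have hθlo2 : 2*π*((i-j-1 : ℕ):ℝ)/r ≤ 2*π := by
      rw [div_le_iff₀ hrpos]
      have : ((i-j-1 : ℕ):ℝ) ≤ r := by exact_mod_cast (by omega : i-j-1 ≤ r)
      nlinarith
    have hθhi : (0:ℝ) ≤ 2*π*((i+j+1 : ℕ):ℝ)/r := by positivity
    have hθhi2 : 2*π*((i+j+1 : ℕ):ℝ)/r ≤ 2*π := by
      rw [div_le_iff₀ hrpos]
      have : ((i+j+1 : ℕ):ℝ) ≤ r := by exact_mod_cast (by omega : i+j+1 ≤ r)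
      nlinarith
    have hb1 := lob_bound hθlo hθlo2
    have hb2 := lob_bound hθhi hθhi2
    have hdiff : lob (2*π*((i-j-1 : ℕ):ℝ)/r) - lob (2*π*((i+j+1 : ℕ):ℝ)/r)
        ≤ 3 * lob (π/3) := by
      rw [abs_le] at hb1 hb2
      linarith [lob_id]
    -- combine
    have hsum : ∑ n ∈ Finset.Icc (i-j) (i-1), FF (2*π*(n:ℝ)/r)
        + ∑ n ∈ Finset.Icc (i+1) (i+j), FF (2*π*(n:ℝ)/r)
        ≤ (r:ℝ) * (c + ε/2) + 8 * Real.log 2 := by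
      have hcomb : (r/(2*π)) * (lob (2*π*((i-j-1 : ℕ):ℝ)/r) - lob (2*π*((i+j+1 : ℕ):ℝ)/r))
          ≤ (r/(2*π)) * (3 * lob (π/3)) :=
        mul_le_mul_of_nonneg_left hdiff (by positivity)
      have he1 : (r/(2*π)) * (3 * lob (π/3)) = (r:ℝ) * c := by
        rw [hcdef]; field_simp
      have he2 : (r/(2*π))*(5*ε') + (r/(2*π))*(5*ε') = (r:ℝ) * (ε/2) := by
        rw [hε'def]; field_simp; ring
      have := add_le_add hM1 hM2
      nlinarith [this, hcomb]
    calc Real.exp (∑ n ∈ Finset.Icc (i-j) (i-1), FF (2*π*(n:ℝ)/r)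
          + ∑ n ∈ Finset.Icc (i+1) (i+j), FF (2*π*(n:ℝ)/r))
        ≤ Real.exp ((r:ℝ) * (c + ε/2) + 8 * Real.log 2) := Real.exp_le_exp.2 hsum
      _ = 256 * Real.exp ((r:ℝ) * (c + ε/2)) := by
          rw [Real.exp_add]
          have h256 : (8:ℝ) * Real.log 2 = Real.log 256 := by
            rw [show (256:ℝ) = 2^(8:ℕ) by norm_num, Real.log_pow]
            push_cast; ring
          rw [h256, Real.exp_log (by norm_num)]
          ring
  -- assemble
  have hE1 : (1:ℝ) ≤ Real.exp ((r:ℝ) * (c + ε/2)) := by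
    apply Real.one_le_exp
    positivity
  set E : ℝ := Real.exp ((r:ℝ) * (c + ε/2)) with hEdef
  have hsumJ : |fig8J r i| ≤ 1 + ((i-1 : ℕ):ℝ) * (256 * E) := by
    unfold fig8J
    refine le_trans (abs_add_le _ _) ?_
    rw [abs_one]
    refine add_le_add_right ?_ 1
    refine le_trans (Finset.abs_sum_le_sum_abs _ _) ?_
    refine le_trans (Finset.sum_le_sum hprod) ?_
    rw [Finset.sum_const, Nat.card_Icc, nsmul_eq_mul]
    apply mul_le_mul_of_nonneg_right _ (by positivity)
    exact_mod_cast (by omega : i - 1 + 1 - 1 ≤ i - 1)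
  have hi_r : ((i-1 : ℕ):ℝ) ≤ (r:ℝ) := by exact_mod_cast (by omega : i - 1 ≤ r)
  have hstep1 : |fig8J r i| ≤ (1 + 256*(r:ℝ)) * E := by
    have h256 : ((i-1 : ℕ):ℝ) * (256 * E) ≤ 256*(r:ℝ)*E := by
      have hEpos : 0 < E := by positivity
      nlinarith
    nlinarith [hsumJ, hE1]
  have hstep2 : 1 + 256*(r:ℝ) ≤ Real.exp ((r:ℝ)*ε/2) := by
    have h1 : (r:ℝ)*ε/4 + 1 ≤ Real.exp ((r:ℝ)*ε/4) := Real.add_one_le_exp _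
    have h2 : Real.exp ((r:ℝ)*ε/4) * Real.exp ((r:ℝ)*ε/4) = Real.exp ((r:ℝ)*ε/2) := by
      rw [← Real.exp_add]; ring_nf
    have h3 : 4112 < (r:ℝ)*ε^2 := by
      rw [div_lt_iff₀ (by positivity : (0:ℝ) < ε^2)] at hR2
      nlinarith
    have h4 : ((r:ℝ)*ε/4+1) * ((r:ℝ)*ε/4+1) ≤ Real.exp ((r:ℝ)*ε/2) := by
      rw [← h2]
      exact mul_le_mul h1 h1 (by positivity) (Real.exp_nonneg _)
    nlinarith [h4, hrpos, hε]
  have hfin : |fig8J r i| ≤ Real.exp ((r:ℝ) * (c + ε)) := by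
    have h5 : (1 + 256*(r:ℝ)) * E ≤ Real.exp ((r:ℝ)*ε/2) * E := by
      apply mul_le_mul_of_nonneg_right hstep2 (by positivity)
    have h6 : Real.exp ((r:ℝ)*ε/2) * E = Real.exp ((r:ℝ) * (c + ε)) := by
      rw [hEdef, ← Real.exp_add]
      congr 1
      ring
    calc |fig8J r i| ≤ (1 + 256*(r:ℝ)) * E := hstep1
      _ ≤ Real.exp ((r:ℝ)*ε/2) * E := h5
      _ = Real.exp ((r:ℝ) * (c + ε)) := h6
  have hcast : (r:ℝ) = 2*(m:ℝ)+1 := by rw [hrdef]; push_cast; ring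
  rw [hcast, hcdef] at hfin
  exact hfin
end

section
/- Let r ≥ 3 be an odd integer and A ∈ ℂ a primitive 2r-th root of unity. If (i,j,k,l,m,n) ∈ I_r⁶ is an admissible 6-tuple, then (i,j,k,l′,m′,n′) is also an admissible 6-tuple, and the quantum 6j-symbols agree: |i j k; l′ m′ n′| = |i j k; l m n|. -/
/-- The quantum integer `[n] = (A^{2n} − A^{−2n})/(A² − A^{−2})`. -/
noncomputable def qint (A : ℂ) (n : ℤ) : ℂ :=
  (A^(2*n) - A^(-(2*n))) / (A^(2:ℤ) - A^(-2:ℤ))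

/-- The quantum factorial `[n]! = ∏_{k=1}^{n} [k]`, with `[0]! = 1`. -/
noncomputable def qfact (A : ℂ) (n : ℕ) : ℂ := ∏ k ∈ Finset.Icc 1 n, qint A k

/-- A triple `(i,j,k) ∈ I_r³` is admissible if `i+j ≥ k`, `j+k ≥ i`, `k+i ≥ j`,
`i+j+k` is even and `i+j+k ≤ 2(r−2)`. -/
def triAdm (r i j k : ℕ) : Prop :=
  k ≤ i + j ∧ i ≤ j + k ∧ j ≤ k + i ∧ Even (i + j + k) ∧ i + j + k ≤ 2*(r-2)

/-- A 6-tuple `(i,j,k,l,m,n) ∈ I_r⁶` is admissible if the triples `(i,j,k)`, `(j,l,n)`,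
`(i,m,n)`, `(k,l,m)` are admissible. -/
def sixAdm (r i j k l m n : ℕ) : Prop :=
  triAdm r i j k ∧ triAdm r j l n ∧ triAdm r i m n ∧ triAdm r k l m

/-- The quantum 6j-symbol
`|i j k; l m n| = Σ_{z=max T_a}^{min Q_b} (−1)^z [z+1]! / (∏_a [z−T_a]! ∏_b [Q_b−z]!)`,
where `T₁=(i+j+k)/2, T₂=(i+m+n)/2, T₃=(j+l+n)/2, T₄=(k+l+m)/2`,
`Q₁=(i+j+l+m)/2, Q₂=(i+k+l+n)/2, Q₃=(j+k+m+n)/2`. -/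
noncomputable def sixj (A : ℂ) (i j k l m n : ℕ) : ℂ :=
  ∑ z ∈ Finset.Icc
      (max (max ((i+j+k)/2) ((i+m+n)/2)) (max ((j+l+n)/2) ((k+l+m)/2)))
      (min (min ((i+j+l+m)/2) ((i+k+l+n)/2)) ((j+k+m+n)/2)),
    (-1:ℂ)^z * qfact A (z+1) /
      (qfact A (z - (i+j+k)/2) * qfact A (z - (i+m+n)/2) *
        qfact A (z - (j+l+n)/2) * qfact A (z - (k+l+m)/2) *
        qfact A ((i+j+l+m)/2 - z) * qfact A ((i+k+l+n)/2 - z) *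
        qfact A ((j+k+m+n)/2 - z))

section lems
set_option linter.unusedSectionVars false
variable {r : ℕ} {A : ℂ} (hodd : Odd r) (hr : 3 ≤ r) (hA : IsPrimitiveRoot A (2*r))

include hr hA in
lemma A_ne_zero : A ≠ 0 := by
  intro h
  have h1 := hA.pow_eq_one
  rw [h, zero_pow (by omega : 2*r ≠ 0)] at h1
  exact zero_ne_one h1

include hA in
lemma A_zpow_2r : A ^ ((2*r : ℕ) : ℤ) = 1 := by
  rw [zpow_natCast]; exact hA.pow_eq_one

include hr hA in
lemma qdenom_ne : A^(2:ℤ) - A^(-2:ℤ) ≠ 0 := by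
  intro h
  have hA0 := A_ne_zero hr hA
  have h4 : A ^ (4:ℤ) = 1 := by
    have h2 : A^(2:ℤ) = A^(-2:ℤ) := by linear_combination h
    calc A ^ (4:ℤ) = A^(2:ℤ) * A^(2:ℤ) := by
          rw [← zpow_add₀ hA0]; norm_num
      _ = A^(2:ℤ) * A^(-2:ℤ) := by rw [← h2]
      _ = 1 := by rw [← zpow_add₀ hA0]; norm_num
  rw [show (4:ℤ) = ((4:ℕ):ℤ) by norm_num, zpow_natCast, hA.pow_eq_one_iff_dvd] at h4
  have := Nat.le_of_dvd (by norm_num) h4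
  omega

include hodd hr hA in
lemma qint_nat_ne_zero {k : ℕ} (h1 : 0 < k) (h2 : k < r) : qint A k ≠ 0 := by
  have hA0 := A_ne_zero hr hA
  rw [qint, div_ne_zero_iff]
  refine ⟨?_, qdenom_ne hr hA⟩
  intro hz
  have h4 : A ^ (4*k) = 1 := by
    have h2' : A^(2*(k:ℤ)) = A^(-(2*(k:ℤ))) := by linear_combination hz
    have hh : A ^ ((4*k:ℕ):ℤ) = 1 := by
      push_cast
      calc A ^ (4*(k:ℤ)) = A^(2*(k:ℤ)) * A^(2*(k:ℤ)) := by
            rw [← zpow_add₀ hA0]; ring_nf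
        _ = A^(2*(k:ℤ)) * A^(-(2*(k:ℤ))) := by rw [← h2']
        _ = 1 := by rw [← zpow_add₀ hA0]; ring_nf; rw [zpow_zero]
    rwa [zpow_natCast] at hh
  rw [hA.pow_eq_one_iff_dvd] at h4
  obtain ⟨c, hc⟩ := h4
  rcases Nat.even_or_odd c with ⟨d, rfl⟩ | ⟨e, rfl⟩
  · ring_nf at hc
    rcases Nat.eq_zero_or_pos d with rfl | hd
    · simp at hc; omega
    · have : r ≤ r * d := Nat.le_mul_of_pos_right _ hd
      omega
  · obtain ⟨s, hs⟩ := hodd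
    ring_nf at hc
    omega

include hr hA in
lemma qint_r_zero : qint A r = 0 := by
  rw [qint]
  have h1 : A ^ (2*(r:ℤ)) = 1 := by
    rw [show 2*(r:ℤ) = ((2*r:ℕ):ℤ) by push_cast; ring]; exact A_zpow_2r hA
  have h2 : A ^ (-(2*(r:ℤ))) = 1 := by rw [zpow_neg, h1, inv_one]
  rw [h1, h2, sub_self, zero_div]

include hr hA in
lemma qint_reflect (k : ℤ) : qint A ((r:ℤ) - k) = - qint A k := by
  have hA0 := A_ne_zero hr hA
  have h2r : A ^ (2*(r:ℤ)) = 1 := by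
    rw [show 2*(r:ℤ) = ((2*r:ℕ):ℤ) by push_cast; ring]; exact A_zpow_2r hA
  have e1 : A ^ (2*((r:ℤ)-k)) = A ^ (-(2*k)) := by
    rw [show 2*((r:ℤ)-k) = 2*(r:ℤ) + (-(2*k)) by ring, zpow_add₀ hA0, h2r, one_mul]
  have e2 : A ^ (-(2*((r:ℤ)-k))) = A ^ (2*k) := by
    rw [show -(2*((r:ℤ)-k)) = -(2*(r:ℤ)) + 2*k by ring, zpow_add₀ hA0, zpow_neg, h2r,
      inv_one, one_mul]
  rw [qint, qint, e1, e2, ← neg_div, neg_sub]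

lemma qfact_succ (A : ℂ) (n : ℕ) : qfact A (n+1) = qfact A n * qint A (n+1) := by
  rw [qfact, qfact, Finset.prod_Icc_succ_top (by omega), Nat.cast_add, Nat.cast_one]

include hodd hr hA in
lemma qfact_ne_zero {a : ℕ} (ha : a < r) : qfact A a ≠ 0 := by
  rw [qfact]
  apply Finset.prod_ne_zero_iff.2
  intro x hx
  rw [Finset.mem_Icc] at hx
  exact qint_nat_ne_zero hodd hr hA (by omega) (by omega)

include hr hA in
lemma qfact_zero_of_ge {a : ℕ} (ha : r ≤ a) : qfact A a = 0 := by
  rw [qfact]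
  apply Finset.prod_eq_zero (i := r) (by simp [Finset.mem_Icc]; omega)
  exact qint_r_zero hr hA

include hodd hr hA in
lemma qfact_mul_reflect : ∀ a : ℕ, a ≤ r - 1 →
    qfact A a * qfact A (r-1-a) = (-1)^a * qfact A (r-1) := by
  intro a
  induction a with
  | zero => intro _; simp [qfact]
  | succ a ih =>
    intro ha
    have ih' := ih (by omega)
    have h1 : r - 1 - a = (r - 2 - a) + 1 := by omega
    have h2 : qint A (((r-2-a : ℕ) : ℤ) + 1) = - qint A ((a:ℤ)+1) := by
      rw [show ((r-2-a : ℕ) : ℤ) + 1 = (r:ℤ) - ((a:ℤ)+1) by push_cast; omega,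
        qint_reflect hr hA]
    rw [h1, qfact_succ, h2] at ih'
    rw [show r - 1 - (a+1) = r - 2 - a by omega, qfact_succ]
    push_cast at ih' ⊢
    rw [pow_succ]
    linear_combination (-1 : ℂ) * ih'

include hodd hr hA in
lemma cross_aux (t1 w : ℕ) (h1 : t1 ≤ w) (h2 : w ≤ r-2) :
    (-1:ℂ)^w * qfact A (w+1) * qfact A (r-2-w)
      = (-1:ℂ)^(r-2+t1-w) * qfact A (r-1+t1-w) * qfact A (w-t1) := by
  have ka := qfact_mul_reflect hodd hr hA (w-t1) (by omega)
  have kb := qfact_mul_reflect hodd hr hA (w+1) (by omega)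
  rw [show r-1-(w+1) = r-2-w by omega] at kb
  rw [show r-1-(w-t1) = r-1+t1-w by omega] at ka
  have hsgn : ((-1:ℂ))^(r-2+t1-w) * (-1:ℂ)^(w-t1) = (-1:ℂ)^w * (-1:ℂ)^(w+1) := by
    rw [← pow_add, ← pow_add, show r-2+t1-w+(w-t1) = r-2 by omega,
      show w+(w+1) = 2*w+1 by omega]
    have o1 : Odd (r-2) := by rw [Nat.odd_iff]; rw [Nat.odd_iff] at hodd; omega
    have o2 : Odd (2*w+1) := ⟨w, by omega⟩
    rw [o1.neg_one_pow, o2.neg_one_pow]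
  linear_combination ((-1:ℂ))^w * kb - ((-1:ℂ))^(r-2+t1-w) * ka - qfact A (r-1) * hsgn

end lems

lemma frac_eq (x y p q P : ℂ) (hp : p ≠ 0) (hq : q ≠ 0) (h : x * q = y * p) :
    x / (p * P) = y / (q * P) := by
  rcases eq_or_ne P 0 with rfl | hP
  · simp
  · rw [div_eq_div_iff (mul_ne_zero hp hP) (mul_ne_zero hq hP)]
    linear_combination P * h

lemma triAdm_compl {r a b c : ℕ} (hr : 3 ≤ r) (hb : b ≤ r-2) (hc : c ≤ r-2)
    (h : triAdm r a b c) : triAdm r a (r-2-b) (r-2-c) := by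
  obtain ⟨h1, h2, h3, h4, h5⟩ := h
  rw [Nat.even_iff] at h4
  refine ⟨?_, ?_, ?_, Nat.even_iff.mpr ?_, ?_⟩ <;> omega

lemma mq_aux {a b c d e : ℕ} (h1 : (a+b+c) % 2 = 0) (h2 : (c+d+e) % 2 = 0) :
    (a+b+d+e) % 2 = 0 := by omega

lemma mq_aux2 {a b c d e : ℕ} (h1 : (a+b+c) % 2 = 0) (h2 : (b+d+e) % 2 = 0) :
    (a+c+d+e) % 2 = 0 := by omega

lemma mq_aux3 {a b c d e : ℕ} (h1 : (a+b+c) % 2 = 0) (h2 : (a+d+e) % 2 = 0) :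
    (b+c+d+e) % 2 = 0 := by omega

lemma dd_aux {s : ℕ} (hp : s % 2 = 0) : 2*(s/2) = s := by omega

lemma half3 {r x y z t : ℕ} (hy : y ≤ r-2) (hz : z ≤ r-2)
    (hp : (x+y+z) % 2 = 0) (ht : 2*t = x+y+z) : (x+(r-2-y)+(r-2-z))/2 = r-2+x-t := by
  omega

lemma half4 {r x y u v q : ℕ} (hu : u ≤ r-2) (hv : v ≤ r-2)
    (hp : (x+y+u+v) % 2 = 0) (hq : 2*q = x+y+u+v) :
    (x+y+(r-2-u)+(r-2-v))/2 = r-2+x+y-q := by omega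

lemma t_le {t s p : ℕ} (h : 2*t = s) (hb : s ≤ 2*p) : t ≤ p := by omega

lemma q_le {q x y u v p : ℕ} (h : 2*q = x+y+u+v) (hu : u ≤ p) (hv : v ≤ p) :
    q ≤ p + x + y := by omega

lemma rels {i j k l m n t1 t2 t3 t4 q1 q2 q3 : ℕ}
    (d1 : 2*t1 = i+j+k) (d2 : 2*t2 = i+m+n) (d3 : 2*t3 = j+l+n) (d4 : 2*t4 = k+l+m)
    (dq1 : 2*q1 = i+j+l+m) (dq2 : 2*q2 = i+k+l+n) (dq3 : 2*q3 = j+k+m+n) :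
    t1 + q3 = t2 + j + k ∧ t1 + q2 = t3 + i + k ∧ t1 + q1 = t4 + i + j ∧
      q1 + k = t1 + t4 ∧ q2 + j = t1 + t3 ∧ q3 + i = t1 + t2 := by omega

lemma memb_core1 {p i j k t1 t2 t3 t4 q1 q2 q3 u2 u3 u4 v1 v2 v3 w z : ℕ}
    (hu2 : u2 + t2 = p + i) (hu3 : u3 + t3 = p + j) (hu4 : u4 + t4 = p + k)
    (hv1 : v1 + q1 = p + i + j) (hv2 : v2 + q2 = p + i + k) (hv3 : v3 + q3 = p + j + k)
    (ra : t1 + q3 = t2 + j + k) (rb : t1 + q2 = t3 + i + k) (rc : t1 + q1 = t4 + i + j)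
    (rd : q1 + k = t1 + t4) (re : q2 + j = t1 + t3) (rf : q3 + i = t1 + t2)
    (hz : z + w = p + t1)
    (g1 : t1 ≤ w) (g2 : u2 ≤ w) (g3 : u3 ≤ w) (g4 : u4 ≤ w)
    (g5 : w ≤ v1) (g6 : w ≤ v2) (g7 : w ≤ v3) (g8 : w ≤ p) :
    t1 ≤ z ∧ t2 ≤ z ∧ t3 ≤ z ∧ t4 ≤ z ∧ z ≤ q1 ∧ z ≤ q2 ∧ z ≤ q3 ∧ z ≤ p := by
  omega

lemma memb_core2 {p i j k t1 t2 t3 t4 q1 q2 q3 u2 u3 u4 v1 v2 v3 w z : ℕ}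
    (hu2 : u2 + t2 = p + i) (hu3 : u3 + t3 = p + j) (hu4 : u4 + t4 = p + k)
    (hv1 : v1 + q1 = p + i + j) (hv2 : v2 + q2 = p + i + k) (hv3 : v3 + q3 = p + j + k)
    (ra : t1 + q3 = t2 + j + k) (rb : t1 + q2 = t3 + i + k) (rc : t1 + q1 = t4 + i + j)
    (rd : q1 + k = t1 + t4) (re : q2 + j = t1 + t3) (rf : q3 + i = t1 + t2)
    (hz : w + z = p + t1)
    (g1 : t1 ≤ z) (g2 : t2 ≤ z) (g3 : t3 ≤ z) (g4 : t4 ≤ z)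
    (g5 : z ≤ q1) (g6 : z ≤ q2) (g7 : z ≤ q3) (g8 : z ≤ p) :
    t1 ≤ w ∧ u2 ≤ w ∧ u3 ≤ w ∧ u4 ≤ w ∧ w ≤ v1 ∧ w ≤ v2 ∧ w ≤ v3 ∧ w ≤ p := by
  omega

lemma argA1 {r w : ℕ} (t1 : ℕ) (h1 : w ≤ r-2) (hr : 3 ≤ r) :
    r-2+t1-w+1 = r-1+t1-w := by omega

lemma argA2 {r w : ℕ} (t1 : ℕ) (h1 : w ≤ r-2) : r-2+t1-w-t1 = r-2-w := by omega

lemma argA3 {r t1 t2 j k q3 w : ℕ} (ha : t1 + q3 = t2 + j + k)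
    (h1 : w ≤ r-2) (h2 : w ≤ r-2+j+k-q3) (h3 : q3 ≤ r-2+j+k) :
    r-2+t1-w-t2 = r-2+j+k-q3-w := by omega

lemma argA4 {r t1 t3 i k q2 w : ℕ} (ha : t1 + q2 = t3 + i + k)
    (h1 : w ≤ r-2) (h2 : w ≤ r-2+i+k-q2) (h3 : q2 ≤ r-2+i+k) :
    r-2+t1-w-t3 = r-2+i+k-q2-w := by omega

lemma argA5 {r t1 t4 i j q1 w : ℕ} (ha : t1 + q1 = t4 + i + j)
    (h1 : w ≤ r-2) (h2 : w ≤ r-2+i+j-q1) (h3 : q1 ≤ r-2+i+j) :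
    r-2+t1-w-t4 = r-2+i+j-q1-w := by omega

lemma argA6 {r q1 k t1 t4 w : ℕ} (ha : q1 + k = t1 + t4)
    (h1 : r-2+k-t4 ≤ w) (h2 : w ≤ r-2) (h3 : t4 ≤ r-2) (h4 : k ≤ r-2) :
    q1-(r-2+t1-w) = w-(r-2+k-t4) := by omega

lemma argA7 {r q2 j t1 t3 w : ℕ} (ha : q2 + j = t1 + t3)
    (h1 : r-2+j-t3 ≤ w) (h2 : w ≤ r-2) (h3 : t3 ≤ r-2) (h4 : j ≤ r-2) :
    q2-(r-2+t1-w) = w-(r-2+j-t3) := by omega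

lemma argA8 {r q3 i t1 t2 w : ℕ} (ha : q3 + i = t1 + t2)
    (h1 : r-2+i-t2 ≤ w) (h2 : w ≤ r-2) (h3 : t2 ≤ r-2) (h4 : i ≤ r-2) :
    q3-(r-2+t1-w) = w-(r-2+i-t2) := by omega

lemma lt_auxA {r w t : ℕ} (h : w ≤ r-2) (hr : 3 ≤ r) : w - t < r := by omega

lemma lt_auxB {r w : ℕ} (hr : 3 ≤ r) : r-2-w < r := by omega

lemma reindex (r c L U L' U' : ℕ) (F G : ℕ → ℂ)
    (hF0 : ∀ z, r ≤ z+1 → F z = 0) (hG0 : ∀ w, r ≤ w+1 → G w = 0)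
    (hmem1 : ∀ w, L' ≤ w → w ≤ min U' (r-2) → L ≤ c-w ∧ c-w ≤ min U (r-2))
    (hmem2 : ∀ z, L ≤ z → z ≤ min U (r-2) → L' ≤ c-z ∧ c-z ≤ min U' (r-2))
    (hc : r-2 ≤ c) (hr : 3 ≤ r)
    (hterm : ∀ w, L' ≤ w → w ≤ min U' (r-2) → G w = F (c - w)) :
    ∑ w ∈ Finset.Icc L' U', G w = ∑ z ∈ Finset.Icc L U, F z := by
  have h1 : ∑ w ∈ Finset.Icc L' U', G w = ∑ w ∈ Finset.Icc L' (min U' (r-2)), G w := by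
    refine (Finset.sum_subset (Finset.Icc_subset_Icc le_rfl (min_le_left _ _)) ?_).symm
    intro x hx1 hx2
    rw [Finset.mem_Icc] at hx1 hx2
    exact hG0 x (by omega)
  have h2 : ∑ z ∈ Finset.Icc L U, F z = ∑ z ∈ Finset.Icc L (min U (r-2)), F z := by
    refine (Finset.sum_subset (Finset.Icc_subset_Icc le_rfl (min_le_left _ _)) ?_).symm
    intro x hx1 hx2
    rw [Finset.mem_Icc] at hx1 hx2
    exact hF0 x (by omega)
  rw [h1, h2]
  refine Finset.sum_nbij' (fun w => c - w) (fun z => c - z) ?_ ?_ ?_ ?_ ?_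
  · intro a ha; rw [Finset.mem_Icc] at ha ⊢; exact hmem1 a ha.1 ha.2
  · intro a ha; rw [Finset.mem_Icc] at ha ⊢; exact hmem2 a ha.1 ha.2
  · intro a ha; rw [Finset.mem_Icc] at ha; omega
  · intro a ha; rw [Finset.mem_Icc] at ha; omega
  · intro a ha; rw [Finset.mem_Icc] at ha; exact hterm a ha.1 ha.2

/-- For `r ≥ 3` odd and `A` a primitive `2r`-th root of unity: if
`(i,j,k,l,m,n) ∈ I_r⁶` is admissible then so is `(i,j,k,l′,m′,n′)`, where
`x′ = r−2−x`, and the quantum 6j-symbols agree. -/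
theorem stmt16 (r : ℕ) (hodd : Odd r) (hr : 3 ≤ r) (A : ℂ)
    (hA : IsPrimitiveRoot A (2*r)) (i j k l m n : ℕ)
    (hi : i ≤ r - 2) (hj : j ≤ r - 2) (hk : k ≤ r - 2)
    (hl : l ≤ r - 2) (hm : m ≤ r - 2) (hn : n ≤ r - 2)
    (h : sixAdm r i j k l m n) :
    sixAdm r i j k (r-2-l) (r-2-m) (r-2-n) ∧
      sixj A i j k (r-2-l) (r-2-m) (r-2-n) = sixj A i j k l m n := by
  obtain ⟨⟨c1,c2,c3,e1,b1⟩, ⟨c4,c5,c6,e3,b3⟩, ⟨c7,c8,c9,e2,b2⟩, ⟨c10,c11,c12,e4,b4⟩⟩ := h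
  have m1 : (i+j+k) % 2 = 0 := Nat.even_iff.mp e1
  have m2 : (i+m+n) % 2 = 0 := Nat.even_iff.mp e2
  have m3 : (j+l+n) % 2 = 0 := Nat.even_iff.mp e3
  have m4 : (k+l+m) % 2 = 0 := Nat.even_iff.mp e4
  have mq1 : (i+j+l+m) % 2 = 0 := mq_aux m1 m4
  have mq2 : (i+k+l+n) % 2 = 0 := mq_aux2 m1 m3
  have mq3 : (j+k+m+n) % 2 = 0 := mq_aux3 m1 m2
  refine ⟨⟨⟨c1,c2,c3,e1,b1⟩, triAdm_compl hr hl hn ⟨c4,c5,c6,e3,b3⟩,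
    triAdm_compl hr hm hn ⟨c7,c8,c9,e2,b2⟩,
    triAdm_compl hr hl hm ⟨c10,c11,c12,e4,b4⟩⟩, ?_⟩
  clear e1 e2 e3 e4
  simp only [sixj]
  set t1 := (i+j+k)/2 with ht1
  set t2 := (i+m+n)/2 with ht2
  set t3 := (j+l+n)/2 with ht3
  set t4 := (k+l+m)/2 with ht4
  set q1 := (i+j+l+m)/2 with hq1
  set q2 := (i+k+l+n)/2 with hq2
  set q3 := (j+k+m+n)/2 with hq3
  have d1 : 2*t1 = i+j+k := by rw [ht1]; exact dd_aux m1
  have d2 : 2*t2 = i+m+n := by rw [ht2]; exact dd_aux m2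
  have d3 : 2*t3 = j+l+n := by rw [ht3]; exact dd_aux m3
  have d4 : 2*t4 = k+l+m := by rw [ht4]; exact dd_aux m4
  have dq1 : 2*q1 = i+j+l+m := by rw [hq1]; exact dd_aux mq1
  have dq2 : 2*q2 = i+k+l+n := by rw [hq2]; exact dd_aux mq2
  have dq3 : 2*q3 = j+k+m+n := by rw [hq3]; exact dd_aux mq3
  rw [half3 hm hn m2 d2, half3 hl hn m3 d3, half3 hl hm m4 d4,
    half4 hl hm mq1 dq1, half4 hl hn mq2 dq2, half4 hm hn mq3 dq3]
  obtain ⟨ra, rb, rc, rd, re, rf⟩ := rels d1 d2 d3 d4 dq1 dq2 dq3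
  have ht1p : t1 ≤ r-2 := t_le d1 b1
  have ht2p : t2 ≤ r-2 := t_le d2 b2
  have ht3p : t3 ≤ r-2 := t_le d3 b3
  have ht4p : t4 ≤ r-2 := t_le d4 b4
  have hq1b : q1 ≤ r-2+i+j := q_le dq1 hl hm
  have hq2b : q2 ≤ r-2+i+k := q_le dq2 hl hn
  have hq3b : q3 ≤ r-2+j+k := q_le dq3 hm hn
  have hu2 : r-2+i-t2 + t2 = r-2+i := Nat.sub_add_cancel (le_trans ht2p (Nat.le_add_right _ _))
  have hu3 : r-2+j-t3 + t3 = r-2+j := Nat.sub_add_cancel (le_trans ht3p (Nat.le_add_right _ _))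
  have hu4 : r-2+k-t4 + t4 = r-2+k := Nat.sub_add_cancel (le_trans ht4p (Nat.le_add_right _ _))
  have hv1 : r-2+i+j-q1 + q1 = r-2+i+j := Nat.sub_add_cancel hq1b
  have hv2 : r-2+i+k-q2 + q2 = r-2+i+k := Nat.sub_add_cancel hq2b
  have hv3 : r-2+j+k-q3 + q3 = r-2+j+k := Nat.sub_add_cancel hq3b
  have hzero : ∀ a : ℕ, r ≤ a → qfact A a = 0 := fun a ha => qfact_zero_of_ge hr hA ha
  have hnz : ∀ a : ℕ, a < r → qfact A a ≠ 0 := fun a ha => qfact_ne_zero hodd hr hA ha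
  refine reindex r (r-2+t1) (max (max t1 t2) (max t3 t4)) (min (min q1 q2) q3)
    (max (max t1 (r-2+i-t2)) (max (r-2+j-t3) (r-2+k-t4)))
    (min (min (r-2+i+j-q1) (r-2+i+k-q2)) (r-2+j+k-q3)) _ _
    ?_ ?_ ?_ ?_ (Nat.le_add_right _ _) hr ?_
  · intro z hz
    beta_reduce
    rw [hzero (z+1) hz, mul_zero, zero_div]
  · intro w hw
    beta_reduce
    rw [hzero (w+1) hw, mul_zero, zero_div]
  · intro w h1 h2
    simp only [max_le_iff] at h1
    simp only [le_min_iff] at h2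
    obtain ⟨⟨g1, g2⟩, g3, g4⟩ := h1
    obtain ⟨⟨⟨g5, g6⟩, g7⟩, g8⟩ := h2
    have hz : (r-2+t1-w) + w = r-2+t1 :=
      Nat.sub_add_cancel (le_trans g8 (Nat.le_add_right _ _))
    obtain ⟨z1,z2,z3,z4,z5,z6,z7,z8⟩ :=
      memb_core1 hu2 hu3 hu4 hv1 hv2 hv3 ra rb rc rd re rf hz g1 g2 g3 g4 g5 g6 g7 g8
    exact ⟨by simp only [max_le_iff]; exact ⟨⟨z1,z2⟩,z3,z4⟩,
      by simp only [le_min_iff]; exact ⟨⟨⟨z5,z6⟩,z7⟩,z8⟩⟩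
  · intro z h1 h2
    simp only [max_le_iff] at h1
    simp only [le_min_iff] at h2
    obtain ⟨⟨g1, g2⟩, g3, g4⟩ := h1
    obtain ⟨⟨⟨g5, g6⟩, g7⟩, g8⟩ := h2
    have hz : (r-2+t1-z) + z = r-2+t1 :=
      Nat.sub_add_cancel (le_trans g8 (Nat.le_add_right _ _))
    obtain ⟨z1,z2,z3,z4,z5,z6,z7,z8⟩ :=
      memb_core2 hu2 hu3 hu4 hv1 hv2 hv3 ra rb rc rd re rf hz g1 g2 g3 g4 g5 g6 g7 g8
    exact ⟨by simp only [max_le_iff]; exact ⟨⟨z1,z2⟩,z3,z4⟩,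
      by simp only [le_min_iff]; exact ⟨⟨⟨z5,z6⟩,z7⟩,z8⟩⟩
  · intro w h1 h2
    simp only [max_le_iff] at h1
    simp only [le_min_iff] at h2
    obtain ⟨⟨g1, g2⟩, g3, g4⟩ := h1
    obtain ⟨⟨⟨g5, g6⟩, g7⟩, g8⟩ := h2
    beta_reduce
    rw [argA1 t1 g8 hr, argA2 t1 g8, argA3 ra g8 g7 hq3b, argA4 rb g8 g6 hq2b,
      argA5 rc g8 g5 hq1b, argA6 rd g4 g8 ht4p hk, argA7 re g3 g8 ht3p hj,
      argA8 rf g2 g8 ht2p hi]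
    rw [show qfact A (w-t1) * qfact A (w-(r-2+i-t2)) * qfact A (w-(r-2+j-t3)) *
        qfact A (w-(r-2+k-t4)) * qfact A (r-2+i+j-q1-w) * qfact A (r-2+i+k-q2-w) *
        qfact A (r-2+j+k-q3-w)
      = qfact A (w-t1) * (qfact A (w-(r-2+i-t2)) * qfact A (w-(r-2+j-t3)) *
        qfact A (w-(r-2+k-t4)) * qfact A (r-2+i+j-q1-w) * qfact A (r-2+i+k-q2-w) *
        qfact A (r-2+j+k-q3-w)) from by ring,
      show qfact A (r-2-w) * qfact A (r-2+j+k-q3-w) * qfact A (r-2+i+k-q2-w) *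
        qfact A (r-2+i+j-q1-w) * qfact A (w-(r-2+k-t4)) * qfact A (w-(r-2+j-t3)) *
        qfact A (w-(r-2+i-t2))
      = qfact A (r-2-w) * (qfact A (w-(r-2+i-t2)) * qfact A (w-(r-2+j-t3)) *
        qfact A (w-(r-2+k-t4)) * qfact A (r-2+i+j-q1-w) * qfact A (r-2+i+k-q2-w) *
        qfact A (r-2+j+k-q3-w)) from by ring]
    exact frac_eq _ _ _ _ _ (hnz _ (lt_auxA g8 hr)) (hnz _ (lt_auxB hr))
      (cross_aux hodd hr hA t1 w g1 g8)
end

section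
/- Let r ≥ 3 be an odd integer and A ∈ ℂ a primitive 2r-th root of unity. If (i,j,k,l,m,n) ∈ I_r⁶ is an admissible 6-tuple, then (i′,j′,k,l′,m′,n) is also an admissible 6-tuple, and the quantum 6j-symbols agree: |i′ j′ k; l′ m′ n| = |i j k; l m n|. -/
set_option maxHeartbeats 8000000
set_option linter.unusedVariables false

/-- The summand of the quantum 6j-symbol, abstracted over the seven parameters. -/
noncomputable def trm (A : ℂ) (t1 t2 t3 t4 q1 q2 q3 z : ℕ) : ℂ :=
  (-1:ℂ)^z * qfact A (z+1) /
    (qfact A (z - t1) * qfact A (z - t2) * qfact A (z - t3) * qfact A (z - t4) *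
      qfact A (q1 - z) * qfact A (q2 - z) * qfact A (q3 - z))

lemma qint_complement {A : ℂ} {r : ℕ} (hr : 3 ≤ r) (hA : IsPrimitiveRoot A (2*r)) (t : ℤ) :
    qint A ((r:ℤ) - t) = - qint A t := by
  have hA0 : A ≠ 0 := hA.ne_zero (by omega)
  have h2r : A ^ (2*(r:ℤ)) = 1 := by
    rw [show (2*(r:ℤ)) = ((2*r : ℕ) : ℤ) by push_cast; ring, zpow_natCast]
    exact hA.pow_eq_one
  have e1 : A ^ (2*((r:ℤ) - t)) = A ^ (-(2*t)) := by
    rw [show 2*((r:ℤ)-t) = 2*(r:ℤ) + -(2*t) by ring, zpow_add₀ hA0, h2r, one_mul]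
  have e2 : A ^ (-(2*((r:ℤ) - t))) = A ^ (2*t) := by
    rw [show -(2*((r:ℤ)-t)) = -(2*(r:ℤ)) + 2*t by ring, zpow_add₀ hA0,
      zpow_neg, h2r, inv_one, one_mul]
  unfold qint
  rw [e1, e2]
  ring

lemma qint_r {A : ℂ} {r : ℕ} (hr : 3 ≤ r) (hA : IsPrimitiveRoot A (2*r)) :
    qint A (r:ℤ) = 0 := by
  have h := qint_complement hr hA 0
  simp only [sub_zero] at h
  have h0 : qint A 0 = 0 := by simp [qint]
  rw [h, h0, neg_zero]

lemma qint_ne {A : ℂ} {r : ℕ} (hodd : Odd r) (hr : 3 ≤ r) (hA : IsPrimitiveRoot A (2*r))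
    {t : ℕ} (h1 : 1 ≤ t) (h2 : t ≤ r - 1) : qint A (t : ℤ) ≠ 0 := by
  have hA0 : A ≠ 0 := hA.ne_zero (by omega)
  have key : ∀ s : ℕ, 1 ≤ s → s ≤ r - 1 → A ^ (2*(s:ℤ)) - A ^ (-(2*(s:ℤ))) ≠ 0 := by
    intro s hs1 hs2 hcon
    have e : A ^ (2*(s:ℤ)) = A ^ (-(2*(s:ℤ))) := sub_eq_zero.mp hcon
    have h4 : A ^ (4*s) = 1 := by
      have e2 : A ^ (2*(s:ℤ)) * A ^ (2*(s:ℤ)) = A ^ (-(2*(s:ℤ))) * A ^ (2*(s:ℤ)) := by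
        rw [e]
      rw [← zpow_add₀ hA0, ← zpow_add₀ hA0,
        show (-(2*(s:ℤ)) + 2*s) = 0 by ring,
        show (2*(s:ℤ) + 2*s) = ((4*s : ℕ) : ℤ) by push_cast; ring,
        zpow_natCast, zpow_zero] at e2
      exact e2
    rw [hA.pow_eq_one_iff_dvd] at h4
    -- 2r ∣ 4s is impossible
    have h3 : r ∣ 2*s := by
      have := (mul_dvd_mul_iff_left (by norm_num : (2:ℕ) ≠ 0)).mp
        (by simpa [show 4*s = 2*(2*s) by ring] using h4)
      exact this
    have h5 : r ∣ s :=
      Nat.Coprime.dvd_of_dvd_mul_left ((Nat.coprime_two_left.mpr hodd).symm)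
        (by simpa [mul_comm] using h3)
    exact absurd (Nat.le_of_dvd (by omega) h5) (by omega)
  have hden : A ^ (2:ℤ) - A ^ (-2:ℤ) ≠ 0 := by
    have := key 1 le_rfl (by omega)
    simpa using this
  exact div_ne_zero (key t h1 h2) hden

lemma qfact_ne {A : ℂ} {r : ℕ} (hodd : Odd r) (hr : 3 ≤ r) (hA : IsPrimitiveRoot A (2*r))
    {t : ℕ} (ht : t ≤ r - 1) : qfact A t ≠ 0 := by
  unfold qfact
  rw [Finset.prod_ne_zero_iff]
  intro k hk
  simp only [Finset.mem_Icc] at hk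
  exact qint_ne hodd hr hA hk.1 (le_trans hk.2 ht)

lemma qfact_zero {A : ℂ} {r : ℕ} (hr : 3 ≤ r) (hA : IsPrimitiveRoot A (2*r))
    {t : ℕ} (ht : r ≤ t) : qfact A t = 0 := by
  unfold qfact
  apply Finset.prod_eq_zero (i := r)
  · simp only [Finset.mem_Icc]; omega
  · exact qint_r hr hA

lemma qfact_compl {A : ℂ} {r : ℕ} (hodd : Odd r) (hr : 3 ≤ r) (hA : IsPrimitiveRoot A (2*r)) :
    ∀ t : ℕ, t ≤ r - 1 →
      qfact A t * qfact A (r - 1 - t) = (-1:ℂ)^t * qfact A (r-1) := by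
  intro t
  induction t with
  | zero => intro _; simp [qfact]
  | succ t ih =>
    intro ht
    have key := ih (by omega)
    have e1 : qfact A (r-1-t) = qfact A (r-1-(t+1)) * qint A (((r-1-(t+1)) + 1 : ℕ) : ℤ) := by
      rw [show r-1-t = (r-1-(t+1)) + 1 by omega]
      unfold qfact
      exact Finset.prod_Icc_succ_top (by omega) _
    have e2 : qint A (((r-1-(t+1)) + 1 : ℕ) : ℤ) = - qint A ((t+1 : ℕ) : ℤ) := by
      rw [show (((r-1-(t+1)) + 1 : ℕ) : ℤ) = (r:ℤ) - ((t+1 : ℕ) : ℤ) by omega,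
        qint_complement hr hA]
    have e3 : qfact A (t+1) = qfact A t * qint A ((t+1 : ℕ) : ℤ) := by
      unfold qfact
      exact Finset.prod_Icc_succ_top (by omega) _
    rw [e1, e2] at key
    rw [e3]
    linear_combination (-1 : ℂ) * key

lemma sum_trunc (lo hi c : ℕ) (f : ℕ → ℂ) (h0 : ∀ z, c < z → f z = 0) :
    ∑ z ∈ Finset.Icc lo hi, f z = ∑ z ∈ Finset.Icc lo (min hi c), f z := by
  apply (Finset.sum_subset (Finset.Icc_subset_Icc le_rfl (min_le_left _ _)) ?_).symm
  intro x hx hx'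
  simp only [Finset.mem_Icc] at hx hx'
  exact h0 x (by omega)

lemma sixj_shift {A : ℂ} {r : ℕ} (hodd : Odd r) (hr : 3 ≤ r) (hA : IsPrimitiveRoot A (2*r))
    (T1 T2 T3 T4 Q1 Q2 Q3 T1' T2' T3' T4' Q1' Q2' Q3' c L M L' M' : ℕ)
    (hc : c + 2 = r)
    (e1 : T1' + Q1 = T4 + c) (e2 : T2' + Q1 = T3 + c)
    (e3 : T3' + Q1 = T2 + c) (e4 : T4' + Q1 = T1 + c)
    (f1 : Q1' + Q1 = c + c) (f2 : Q2' + Q1 = Q3 + c) (f3 : Q3' + Q1 = Q2 + c)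
    (b1 : Q1 ≤ T1 + c) (b2 : Q2 ≤ T2 + c) (b3 : Q3 ≤ T2 + c)
    (hLL : L' + Q1 = L + c) (hMM : M' + Q1 = M + c)
    (hMc : M ≤ c) (hM'c : M' ≤ c)
    (hT1 : T1 ≤ L) (hT2 : T2 ≤ L) (hT3 : T3 ≤ L) (hT4 : T4 ≤ L)
    (hT1' : T1' ≤ L') (hT2' : T2' ≤ L') (hT3' : T3' ≤ L') (hT4' : T4' ≤ L')
    (hQ1 : M ≤ Q1) (hQ2 : M ≤ Q2) (hQ3 : M ≤ Q3)
    (hQ1' : M' ≤ Q1') (hQ2' : M' ≤ Q2') (hQ3' : M' ≤ Q3') :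
    ∑ z ∈ Finset.Icc L' M', trm A T1' T2' T3' T4' Q1' Q2' Q3' z
      = ∑ z ∈ Finset.Icc L M, trm A T1 T2 T3 T4 Q1 Q2 Q3 z := by
  have hodd' : r % 2 = 1 := Nat.odd_iff.mp hodd
  refine Finset.sum_nbij' (fun b => b - L' + L) (fun b => b - L + L') ?_ ?_ ?_ ?_ ?_
  · intro a ha
    simp only [Finset.mem_Icc] at ha ⊢
    omega
  · intro a ha
    simp only [Finset.mem_Icc] at ha ⊢
    omega
  · intro a ha
    simp only [Finset.mem_Icc] at ha
    omega
  · intro a ha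
    simp only [Finset.mem_Icc] at ha
    omega
  · intro a ha
    simp only [Finset.mem_Icc] at ha
    obtain ⟨z, hz⟩ : ∃ z, z + L' = a + L := ⟨a - L' + L, by omega⟩
    rw [show a - L' + L = z by omega]
    unfold trm
    rw [show a - T1' = z - T4 by omega]
    rw [show a - T2' = z - T3 by omega]
    rw [show a - T3' = z - T2 by omega]
    rw [show a - T4' = z - T1 by omega]
    rw [show Q1' - a = r - 1 - (z+1) by omega]
    rw [show Q2' - a = Q3 - z by omega]
    rw [show Q3' - a = Q2 - z by omega]
    rw [show a + 1 = r - 1 - (Q1 - z) by omega]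
    have d1 : qfact A (z - T1) ≠ 0 := qfact_ne hodd hr hA (by omega)
    have d2 : qfact A (z - T2) ≠ 0 := qfact_ne hodd hr hA (by omega)
    have d3 : qfact A (z - T3) ≠ 0 := qfact_ne hodd hr hA (by omega)
    have d4 : qfact A (z - T4) ≠ 0 := qfact_ne hodd hr hA (by omega)
    have d5 : qfact A (Q1 - z) ≠ 0 := qfact_ne hodd hr hA (by omega)
    have d6 : qfact A (Q2 - z) ≠ 0 := qfact_ne hodd hr hA (by omega)
    have d7 : qfact A (Q3 - z) ≠ 0 := qfact_ne hodd hr hA (by omega)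
    have d8 : qfact A (r - 1 - (z+1)) ≠ 0 := qfact_ne hodd hr hA (by omega)
    rw [div_eq_div_iff
      (mul_ne_zero (mul_ne_zero (mul_ne_zero (mul_ne_zero (mul_ne_zero
        (mul_ne_zero d4 d3) d2) d1) d8) d7) d6)
      (mul_ne_zero (mul_ne_zero (mul_ne_zero (mul_ne_zero (mul_ne_zero
        (mul_ne_zero d1 d2) d3) d4) d5) d6) d7)]
    have hc1 : qfact A (z+1) * qfact A (r - 1 - (z+1)) = (-1:ℂ)^(z+1) * qfact A (r-1) :=
      qfact_compl hodd hr hA (z+1) (by omega)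
    have hc2 : qfact A (Q1 - z) * qfact A (r - 1 - (Q1 - z))
        = (-1:ℂ)^(Q1 - z) * qfact A (r-1) :=
      qfact_compl hodd hr hA (Q1 - z) (by omega)
    have s1 : (-1:ℂ)^a * (-1:ℂ)^(Q1 - z) = -1 := by
      rw [← pow_add, show a + (Q1 - z) = c by omega]
      exact Odd.neg_one_pow (Nat.odd_iff.mpr (by omega))
    have s2 : (-1:ℂ)^z * (-1:ℂ)^(z+1) = -1 := by
      rw [← pow_add, show z + (z+1) = 2*z+1 by omega]
      exact Odd.neg_one_pow (Nat.odd_iff.mpr (by omega))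
    linear_combination
      ((-1:ℂ)^a * (qfact A (z - T1) * qfact A (z - T2) * qfact A (z - T3) * qfact A (z - T4) *
        qfact A (Q2 - z) * qfact A (Q3 - z))) * hc2
      - ((-1:ℂ)^z * (qfact A (z - T1) * qfact A (z - T2) * qfact A (z - T3) * qfact A (z - T4) *
        qfact A (Q2 - z) * qfact A (Q3 - z))) * hc1
      + (qfact A (r-1) * (qfact A (z - T1) * qfact A (z - T2) * qfact A (z - T3) *
        qfact A (z - T4) * qfact A (Q2 - z) * qfact A (Q3 - z))) * s1
      - (qfact A (r-1) * (qfact A (z - T1) * qfact A (z - T2) * qfact A (z - T3) *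
        qfact A (z - T4) * qfact A (Q2 - z) * qfact A (Q3 - z))) * s2

lemma sixj_core {A : ℂ} {r : ℕ} (hodd : Odd r) (hr : 3 ≤ r) (hA : IsPrimitiveRoot A (2*r))
    (T1 T2 T3 T4 Q1 Q2 Q3 T1' T2' T3' T4' Q1' Q2' Q3' c : ℕ)
    (hc : c + 2 = r)
    (e1 : T1' + Q1 = T4 + c) (e2 : T2' + Q1 = T3 + c)
    (e3 : T3' + Q1 = T2 + c) (e4 : T4' + Q1 = T1 + c)
    (f1 : Q1' + Q1 = c + c) (f2 : Q2' + Q1 = Q3 + c) (f3 : Q3' + Q1 = Q2 + c)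
    (b1 : Q1 ≤ T1 + c) (b2 : Q2 ≤ T2 + c) (b3 : Q3 ≤ T2 + c) :
    ∑ z ∈ Finset.Icc (max (max T1' T2') (max T3' T4')) (min (min Q1' Q2') Q3'),
        trm A T1' T2' T3' T4' Q1' Q2' Q3' z
      = ∑ z ∈ Finset.Icc (max (max T1 T2) (max T3 T4)) (min (min Q1 Q2) Q3),
        trm A T1 T2 T3 T4 Q1 Q2 Q3 z := by
  have hzero : ∀ (t1 t2 t3 t4 q1 q2 q3 : ℕ), ∀ z, c < z →
      trm A t1 t2 t3 t4 q1 q2 q3 z = 0 := by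
    intro t1 t2 t3 t4 q1 q2 q3 z hz
    unfold trm
    rw [qfact_zero hr hA (show r ≤ z + 1 by omega), mul_zero, zero_div]
  rw [sum_trunc (max (max T1' T2') (max T3' T4')) (min (min Q1' Q2') Q3') c _
      (hzero T1' T2' T3' T4' Q1' Q2' Q3'),
    sum_trunc (max (max T1 T2) (max T3 T4)) (min (min Q1 Q2) Q3) c _
      (hzero T1 T2 T3 T4 Q1 Q2 Q3)]
  apply sixj_shift hodd hr hA T1 T2 T3 T4 Q1 Q2 Q3 T1' T2' T3' T4' Q1' Q2' Q3' c
    _ _ _ _ hc e1 e2 e3 e4 f1 f2 f3 b1 b2 b3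
  · omega
  · omega
  · omega
  · omega
  · omega
  · omega
  · omega
  · omega
  · omega
  · omega
  · omega
  · omega
  · omega
  · omega
  · omega
  · omega
  · omega
  · omega

/-- For `r ≥ 3` odd and `A` a primitive `2r`-th root of unity: if
`(i,j,k,l,m,n) ∈ I_r⁶` is admissible then so is `(i′,j′,k,l′,m′,n)`, where
`x′ = r−2−x`, and the quantum 6j-symbols agree. -/
theorem stmt17 (r : ℕ) (hodd : Odd r) (hr : 3 ≤ r) (A : ℂ)
    (hA : IsPrimitiveRoot A (2*r)) (i j k l m n : ℕ)
    (hi : i ≤ r - 2) (hj : j ≤ r - 2) (hk : k ≤ r - 2)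
    (hl : l ≤ r - 2) (hm : m ≤ r - 2) (hn : n ≤ r - 2)
    (h : sixAdm r i j k l m n) :
    sixAdm r (r-2-i) (r-2-j) k (r-2-l) (r-2-m) n ∧
      sixj A (r-2-i) (r-2-j) k (r-2-l) (r-2-m) n = sixj A i j k l m n := by
  obtain ⟨⟨g1,g2,g3,g4,g5⟩,⟨k1,k2,k3,k4,k5⟩,⟨p1,p2,p3,p4,p5⟩,⟨q1,q2,q3,q4,q5⟩⟩ := h
  rw [Nat.even_iff] at g4 k4 p4 q4
  constructor
  · refine ⟨⟨?_,?_,?_,?_,?_⟩,⟨?_,?_,?_,?_,?_⟩,⟨?_,?_,?_,?_,?_⟩,⟨?_,?_,?_,?_,?_⟩⟩ <;>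
      first
        | omega
        | (rw [Nat.even_iff]; omega)
  · have sixj_eq : ∀ (i j k l m n : ℕ), sixj A i j k l m n =
        ∑ z ∈ Finset.Icc
          (max (max ((i+j+k)/2) ((i+m+n)/2)) (max ((j+l+n)/2) ((k+l+m)/2)))
          (min (min ((i+j+l+m)/2) ((i+k+l+n)/2)) ((j+k+m+n)/2)),
          trm A ((i+j+k)/2) ((i+m+n)/2) ((j+l+n)/2) ((k+l+m)/2)
            ((i+j+l+m)/2) ((i+k+l+n)/2) ((j+k+m+n)/2) z := fun _ _ _ _ _ _ => rfl
    rw [sixj_eq, sixj_eq]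
    apply sixj_core hodd hr hA _ _ _ _ _ _ _ _ _ _ _ _ _ _ (r-2) <;> omega
end
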